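/- Let f ∈ C_l²(E), let e₁ = (1,0) and e₂ = (0,1). Then for every x ∈ E and every i ∈ {1,2}, the integral defining G_i f(x) is well defined (the integrand is ν-integrable) and lim_{ε↓0} ε^{−1} ( ∫_E f dQ_{x + ε e_i} − f(x) ) = G_i f(x). -/

import Mathlib

open MeasureTheory ProbabilityTheory Filter Set
open scoped ENNReal NNReal Topology

noncomputable section

/-- `E`, the boundary of the closed first quadrant: `([0,∞)×{0}) ∪ ({0}×[0,∞))`. -/
def Eset : Set (ℝ × ℝ) := {p | (0 ≤ p.1 ∧ p.2 = 0) ∨ (p.1 = 0 ∧ 0 ≤ p.2)}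

/-- The open first quadrant `(0,∞)²`. -/
def openQuad : Set (ℝ × ℝ) := {p | 0 < p.1 ∧ 0 < p.2}

/-- The closed first quadrant `[0,∞)²`. -/
def closedQuad : Set (ℝ × ℝ) := {p | 0 ≤ p.1 ∧ 0 ≤ p.2}

/-- Density of the harmonic measure `Q_(u,v)` on the horizontal part of `E`. -/
def qdensH (u v ubar : ℝ) : ℝ :=
  (4 / Real.pi) * (u * v * ubar) / (4 * u ^ 2 * v ^ 2 + (ubar ^ 2 + v ^ 2 - u ^ 2) ^ 2)

/-- Density of the harmonic measure `Q_(u,v)` on the vertical part of `E`. -/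
def qdensV (u v vbar : ℝ) : ℝ :=
  (4 / Real.pi) * (u * v * vbar) / (4 * u ^ 2 * v ^ 2 + (vbar ^ 2 + u ^ 2 - v ^ 2) ^ 2)

/-- The harmonic measure `Q_x` of planar Brownian motion in the first quadrant:
for `x` in the open quadrant it has the explicit densities on the two parts of `E`,
and `Q_x = δ_x` otherwise (in particular for `x ∈ E`). -/
def Qmeas (x : ℝ × ℝ) : Measure (ℝ × ℝ) :=
  if 0 < x.1 ∧ 0 < x.2 then
    (((volume.restrict (Ici (0 : ℝ))).withDensity fun ubar =>
        ENNReal.ofReal (qdensH x.1 x.2 ubar)).map fun ubar : ℝ => (ubar, (0 : ℝ)))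
      + (((volume.restrict (Ici (0 : ℝ))).withDensity fun vbar =>
        ENNReal.ofReal (qdensV x.1 x.2 vbar)).map fun vbar : ℝ => ((0 : ℝ), vbar))
  else Measure.dirac x

/-- The lozenge product `x ◊ y = −(x₁+x₂)(y₁+y₂) + i(x₁−x₂)(y₁−y₂)`. -/
def loz (x y : ℝ × ℝ) : ℂ :=
  -((((x.1 + x.2) * (y.1 + y.2) : ℝ)) : ℂ)
    + Complex.I * ((((x.1 - x.2) * (y.1 - y.2) : ℝ)) : ℂ)

/-- The self-duality function `F(x,y) = exp(x ◊ y)`. -/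
def Fdual (x y : ℝ × ℝ) : ℂ := Complex.exp (loz x y)

/-- The σ-finite measure `ν` on `E`, the vague limit of `ε⁻¹ Q_(1,ε)`. -/
def nuMeas : Measure (ℝ × ℝ) :=
  (((volume.restrict (Ici (0 : ℝ))).withDensity fun u =>
      ENNReal.ofReal ((4 / Real.pi) * u / ((1 - u) ^ 2 * (1 + u) ^ 2))).map
    fun u : ℝ => (u, (0 : ℝ)))
  + (((volume.restrict (Ici (0 : ℝ))).withDensity fun v =>
      ENNReal.ofReal ((4 / Real.pi) * v / (1 + v ^ 2) ^ 2)).map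
    fun v : ℝ => ((0 : ℝ), v))

/-- A planar Brownian motion started at `b`: continuous paths, `B 0 = b` a.s., the two
centered coordinate processes are independent, have independent increments
(each increment is independent of the past of the whole path), and Gaussian increments
`B i t − B i s ∼ N(0, t − s)`. -/
structure IsPlanarBM {Ω : Type*} [MeasurableSpace Ω] (P : Measure Ω)
    (B : ℝ → Ω → ℝ × ℝ) (b : ℝ × ℝ) : Prop where
  meas : ∀ t : ℝ, Measurable (B t)
  cont : ∀ ω, Continuous fun t => B t ω
  init : ∀ᵐ ω ∂P, B 0 ω = b
  indep_coords : IndepFun (fun ω => fun t : ℝ => (B t ω).1 - b.1)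
      (fun ω => fun t : ℝ => (B t ω).2 - b.2) P
  gauss_fst : ∀ s t : ℝ, 0 ≤ s → s ≤ t →
      P.map (fun ω => (B t ω).1 - (B s ω).1) = gaussianReal 0 (Real.toNNReal (t - s))
  gauss_snd : ∀ s t : ℝ, 0 ≤ s → s ≤ t →
      P.map (fun ω => (B t ω).2 - (B s ω).2) = gaussianReal 0 (Real.toNNReal (t - s))
  indepIncr_fst : ∀ s t : ℝ, 0 ≤ s → s ≤ t →
      IndepFun (fun ω => (B t ω).1 - (B s ω).1) (fun ω => fun r : ℝ => B (min r s) ω) P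
  indepIncr_snd : ∀ s t : ℝ, 0 ≤ s → s ≤ t →
      IndepFun (fun ω => (B t ω).2 - (B s ω).2) (fun ω => fun r : ℝ => B (min r s) ω) P

/-- The first positive time at which the path `f` leaves the set `S`
(`sInf ∅ = 0` by convention; the infimum is attained in `ℝ` whenever the set is nonempty). -/
def exitTime (f : ℝ → ℝ × ℝ) (S : Set (ℝ × ℝ)) : ℝ := sInf {t : ℝ | 0 < t ∧ f t ∉ S}

/-- The rectangular cone `[−z₁,∞) × [−z₂,∞)` northeast of `−z`. -/
def cone (z : ℝ × ℝ) : Set (ℝ × ℝ) := Ici (-z.1) ×ˢ Ici (-z.2)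

/-- Partial derivative `∂₁ f` along the horizontal axis (one-sided at `0`). -/
def d1 (f : ℝ × ℝ → ℂ) (u : ℝ) : ℂ := derivWithin (fun t : ℝ => f (t, 0)) (Ici 0) u

/-- Partial derivative `∂₂ f` along the vertical axis (one-sided at `0`). -/
def d2 (f : ℝ × ℝ → ℂ) (v : ℝ) : ℂ := derivWithin (fun t : ℝ => f (0, t)) (Ici 0) v

/-- The space `C_l(E)`: continuous on `E` with equal finite limits along both axes. -/
def MemCl (g : ℝ × ℝ → ℂ) : Prop :=
  ContinuousOn g Eset ∧ ∃ L : ℂ, Tendsto (fun u : ℝ => g (u, 0)) atTop (𝓝 L) ∧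
    Tendsto (fun v : ℝ => g (0, v)) atTop (𝓝 L)

/-- The space `C_l²(E)` of twice differentiable elements of `C_l(E)`. -/
structure MemCl2 (f : ℝ × ℝ → ℂ) : Prop where
  contOn : ContinuousOn f Eset
  limits : ∃ L : ℂ, Tendsto (fun u : ℝ => f (u, 0)) atTop (𝓝 L) ∧
      Tendsto (fun v : ℝ => f (0, v)) atTop (𝓝 L)
  diff1 : ∀ u : ℝ, 0 ≤ u → DifferentiableWithinAt ℝ (fun t : ℝ => f (t, 0)) (Ici 0) u
  diff2 : ∀ v : ℝ, 0 ≤ v → DifferentiableWithinAt ℝ (fun t : ℝ => f (0, t)) (Ici 0) v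
  contd1 : ContinuousOn (d1 f) (Ici 0)
  contd2 : ContinuousOn (d2 f) (Ici 0)
  decay1 : Tendsto (fun u : ℝ => (u : ℂ) * d1 f u) atTop (𝓝 0)
  decay2 : Tendsto (fun v : ℝ => (v : ℂ) * d2 f v) atTop (𝓝 0)
  diff11 : ∀ u : ℝ, 0 < u → DifferentiableAt ℝ (d1 f) u
  diff22 : ∀ v : ℝ, 0 < v → DifferentiableAt ℝ (d2 f) v
  bdd2 : ∃ C : ℝ, ∀ r : ℝ, 0 < r → r * (‖deriv (d1 f) r‖ + ‖deriv (d2 f) r‖) ≤ C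

/-- `f†(x₁,x₂) := f(x₂,x₁)`. -/
def swapF (f : ℝ × ℝ → ℂ) : ℝ × ℝ → ℂ := fun x => f (x.2, x.1)

/-- The operator `G₂` (generator part for a drift in direction `(0,1)`). -/
def G2op (f : ℝ × ℝ → ℂ) (x : ℝ × ℝ) : ℂ :=
  if x.1 = 0 then d2 f x.2
  else ((x.1 : ℂ))⁻¹ *
    ∫ y, (f (x.1 • y) - f x - (((x.1 * (y.1 - 1)) : ℝ) : ℂ) * d1 f x.1) ∂nuMeas

/-- The operator `G₁ f := (G₂ f†)†`. -/
def G1op (f : ℝ × ℝ → ℂ) (x : ℝ × ℝ) : ℂ := G2op (swapF f) (x.2, x.1)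

/-- The generator `G^{c,θ} f(x) = c(θ₁−x₁)G₁f(x) + c(θ₂−x₂)G₂f(x)`. -/
def Gop (c : ℝ) (θ : ℝ × ℝ) (f : ℝ × ℝ → ℂ) (x : ℝ × ℝ) : ℂ :=
  (((c * (θ.1 - x.1) : ℝ)) : ℂ) * G1op f x + (((c * (θ.2 - x.2) : ℝ)) : ℂ) * G2op f x

end

noncomputable section Helpers
namespace G16
open MeasureTheory Filter Set
open scoped ENNReal NNReal Topology

abbrev μ0 : Measure ℝ := volume.restrict (Ici (0 : ℝ))

lemma embH : MeasurableEmbedding (fun s : ℝ => (s, (0 : ℝ))) :=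
  measurableEmbedding_prod_mk_right 0

lemma embV : MeasurableEmbedding (fun s : ℝ => ((0 : ℝ), s)) :=
  measurableEmbedding_prodMk_left 0

/-- Generic measure on `E` built from two densities. -/
def axisMeas (p q : ℝ → ℝ) : Measure (ℝ × ℝ) :=
  ((μ0.withDensity fun s => ENNReal.ofReal (p s)).map fun s : ℝ => (s, (0 : ℝ)))
    + ((μ0.withDensity fun s => ENNReal.ofReal (q s)).map fun s : ℝ => ((0 : ℝ), s))

lemma nuMeas_eq : nuMeas = axisMeas
    (fun s => (4 / Real.pi) * s / ((1 - s) ^ 2 * (1 + s) ^ 2))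
    (fun s => (4 / Real.pi) * s / (1 + s ^ 2) ^ 2) := rfl

lemma Qmeas_eq {u v : ℝ} (hu : 0 < u) (hv : 0 < v) :
    Qmeas (u, v) = axisMeas (qdensH u v) (qdensV u v) := by
  simp only [Qmeas, axisMeas]; rw [if_pos ⟨hu, hv⟩]

lemma integrable_smul_toNN_iff {p : ℝ → ℝ} (hp : Measurable p) (hp0 : ∀ s, 0 ≤ s → 0 ≤ p s)
    (G : ℝ → ℂ) :
    Integrable G (μ0.withDensity fun s => ENNReal.ofReal (p s)) ↔
      Integrable (fun s => p s • G s) μ0 := by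
  have h1 : (fun s => ENNReal.ofReal (p s)) = (fun s => ((p s).toNNReal : ℝ≥0∞)) := rfl
  rw [h1, integrable_withDensity_iff_integrable_smul hp.real_toNNReal]
  apply integrable_congr
  filter_upwards [ae_restrict_mem measurableSet_Ici] with s hs
  rw [NNReal.smul_def, Real.coe_toNNReal _ (hp0 s hs)]

lemma integral_smul_toNN {p : ℝ → ℝ} (hp : Measurable p) (hp0 : ∀ s, 0 ≤ s → 0 ≤ p s)
    (G : ℝ → ℂ) :
    ∫ s, G s ∂(μ0.withDensity fun s => ENNReal.ofReal (p s)) = ∫ s in Ioi (0:ℝ), p s • G s := by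
  have h1 : (fun s => ENNReal.ofReal (p s)) = (fun s => ((p s).toNNReal : ℝ≥0∞)) := rfl
  rw [h1, integral_withDensity_eq_integral_smul hp.real_toNNReal]
  rw [show (μ0 : Measure ℝ) = volume.restrict (Ici (0:ℝ)) from rfl, ← integral_Ici_eq_integral_Ioi]
  apply integral_congr_ae
  filter_upwards [ae_restrict_mem measurableSet_Ici] with s hs
  rw [NNReal.smul_def, Real.coe_toNNReal _ (hp0 s hs)]

lemma integrable_axisMeas_iff {p q : ℝ → ℝ} (hp : Measurable p) (hq : Measurable q)
    (hp0 : ∀ s, 0 ≤ s → 0 ≤ p s) (hq0 : ∀ s, 0 ≤ s → 0 ≤ q s) (F : ℝ × ℝ → ℂ) :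
    Integrable F (axisMeas p q) ↔
      (Integrable (fun s => p s • F (s, 0)) μ0 ∧ Integrable (fun s => q s • F (0, s)) μ0) := by
  rw [axisMeas, integrable_add_measure, embH.integrable_map_iff, embV.integrable_map_iff,
    integrable_smul_toNN_iff hp hp0, integrable_smul_toNN_iff hq hq0]
  exact Iff.rfl

lemma integral_axisMeas {p q : ℝ → ℝ} (hp : Measurable p) (hq : Measurable q)
    (hp0 : ∀ s, 0 ≤ s → 0 ≤ p s) (hq0 : ∀ s, 0 ≤ s → 0 ≤ q s) {F : ℝ × ℝ → ℂ}
    (hF : Integrable F (axisMeas p q)) :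
    ∫ z, F z ∂(axisMeas p q) = (∫ s in Ioi (0:ℝ), p s • F (s, 0)) + ∫ s in Ioi (0:ℝ), q s • F (0, s) := by
  have h := (integrable_axisMeas_iff hp hq hp0 hq0 F).1 hF
  rw [axisMeas, integral_add_measure, embH.integral_map, embV.integral_map,
    integral_smul_toNN hp hp0, integral_smul_toNN hq hq0]
  · rw [embH.integrable_map_iff, integrable_smul_toNN_iff hp hp0]
    exact h.1
  · rw [embV.integrable_map_iff, integrable_smul_toNN_iff hq hq0]
    exact h.2

/-! Kernel factorizations -/

lemma pi_pos' : (0:ℝ) < Real.pi := Real.pi_pos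

lemma quartic_factorH (u ε s : ℝ) :
    4 * u ^ 2 * ε ^ 2 + (s ^ 2 + ε ^ 2 - u ^ 2) ^ 2
      = ((s - u) ^ 2 + ε ^ 2) * ((s + u) ^ 2 + ε ^ 2) := by ring

lemma quartic_factorV (u ε s : ℝ) :
    4 * u ^ 2 * ε ^ 2 + (s ^ 2 + u ^ 2 - ε ^ 2) ^ 2
      = ((s - ε) ^ 2 + u ^ 2) * ((s + ε) ^ 2 + u ^ 2) := by ring

lemma qdensH_eq {u ε : ℝ} (hε : 0 < ε) (s : ℝ) :
    qdensH u ε s = (ε / Real.pi) * (((s - u) ^ 2 + ε ^ 2)⁻¹ - ((s + u) ^ 2 + ε ^ 2)⁻¹) := by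
  have hA : (0:ℝ) < (s - u) ^ 2 + ε ^ 2 := by positivity
  have hB : (0:ℝ) < (s + u) ^ 2 + ε ^ 2 := by positivity
  have hπ : Real.pi ≠ 0 := Real.pi_ne_zero
  rw [qdensH, quartic_factorH]
  field_simp
  ring

lemma qdensV_eq {u ε : ℝ} (hu : 0 < u) (s : ℝ) :
    qdensV u ε s = (u / Real.pi) * (((s - ε) ^ 2 + u ^ 2)⁻¹ - ((s + ε) ^ 2 + u ^ 2)⁻¹) := by
  have hA : (0:ℝ) < (s - ε) ^ 2 + u ^ 2 := by positivity
  have hB : (0:ℝ) < (s + ε) ^ 2 + u ^ 2 := by positivity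
  have hπ : Real.pi ≠ 0 := Real.pi_ne_zero
  rw [qdensV, quartic_factorV]
  field_simp
  ring

lemma qdensH_nonneg {u ε : ℝ} (hu : 0 ≤ u) (hε : 0 ≤ ε) {s : ℝ} (hs : 0 ≤ s) :
    0 ≤ qdensH u ε s := by
  rw [qdensH]
  apply div_nonneg
  · positivity
  · positivity

lemma qdensV_nonneg {u ε : ℝ} (hu : 0 ≤ u) (hε : 0 ≤ ε) {s : ℝ} (hs : 0 ≤ s) :
    0 ≤ qdensV u ε s := by
  rw [qdensV]
  apply div_nonneg
  · positivity
  · positivity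

/-! Improper integrals of the kernels -/

lemma hasDerivAt_atanK {ε : ℝ} (hε : 0 < ε) (c x : ℝ) :
    HasDerivAt (fun s => ε⁻¹ * Real.arctan ((s - c) / ε)) (((x - c) ^ 2 + ε ^ 2)⁻¹) x := by
  have h1 : HasDerivAt (fun s : ℝ => (s - c) / ε) (1 / ε) x := by
    simpa using ((hasDerivAt_id x).sub_const c).div_const ε
  have h2 := (Real.hasDerivAt_arctan ((x - c) / ε)).comp x h1
  have h3 := h2.const_mul ε⁻¹
  refine h3.congr_deriv ?_
  have hε2 : (0:ℝ) < (x - c) ^ 2 + ε ^ 2 := by positivity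
  field_simp
  ring

lemma hasDerivAt_logK {ε : ℝ} (hε : 0 < ε) (c x : ℝ) :
    HasDerivAt (fun s => (1 / 2) * Real.log ((s - c) ^ 2 + ε ^ 2))
      ((x - c) / ((x - c) ^ 2 + ε ^ 2)) x := by
  have hpos : (0:ℝ) < (x - c) ^ 2 + ε ^ 2 := by positivity
  have h1 : HasDerivAt (fun s : ℝ => (s - c) ^ 2 + ε ^ 2) (2 * (x - c)) x := by
    have := ((hasDerivAt_id x).sub_const c).pow 2
    simpa [mul_comm] using this.add_const (ε ^ 2)
  have h2 := (Real.hasDerivAt_log hpos.ne').comp x h1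
  have h3 := h2.const_mul (1 / 2 : ℝ)
  refine h3.congr_deriv ?_
  field_simp

lemma tendsto_atanK {ε : ℝ} (hε : 0 < ε) (c : ℝ) :
    Tendsto (fun s => ε⁻¹ * Real.arctan ((s - c) / ε)) atTop (𝓝 (ε⁻¹ * (Real.pi / 2))) := by
  have h1 : Tendsto (fun s : ℝ => (s - c) / ε) atTop atTop := by
    apply Tendsto.atTop_div_const hε
    exact tendsto_atTop_add_const_right _ _ tendsto_id
  exact ((Real.tendsto_arctan_atTop.mono_right nhdsWithin_le_nhds).comp h1).const_mul _

section FTCkernels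

variable {u ε : ℝ}

private def FH (u ε : ℝ) (s : ℝ) : ℝ :=
  (ε / Real.pi) * (ε⁻¹ * Real.arctan ((s - u) / ε) - ε⁻¹ * Real.arctan ((s - (-u)) / ε))

private lemma FH_deriv (hε : 0 < ε) : ∀ x ∈ Ici (0:ℝ),
    HasDerivAt (fun s => FH u ε s) (qdensH u ε x) x := by
  intro x _
  have h := ((hasDerivAt_atanK hε u x).sub (hasDerivAt_atanK hε (-u) x)).const_mul
    (ε / Real.pi)
  rw [qdensH_eq hε]
  have hx : ∀ y : ℝ, y - (-u) = y + u := fun y => by ring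
  simp only [FH, hx]
  simpa [hx] using h

private lemma FH_tendsto (hε : 0 < ε) :
    Tendsto (fun s => FH u ε s) atTop (𝓝 0) := by
  have h := ((tendsto_atanK hε u).sub (tendsto_atanK hε (-u))).const_mul (ε / Real.pi)
  simpa [FH] using h

lemma integrableOn_qdensH (hu : 0 < u) (hε : 0 < ε) :
    IntegrableOn (qdensH u ε) (Ioi 0) :=
  integrableOn_Ioi_deriv_of_nonneg' (FH_deriv hε)
    (fun x hx => qdensH_nonneg hu.le hε.le (le_of_lt hx)) (FH_tendsto hε)

lemma integral_qdensH (hu : 0 < u) (hε : 0 < ε) :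
    ∫ s in Ioi (0:ℝ), qdensH u ε s = (2 / Real.pi) * Real.arctan (u / ε) := by
  rw [integral_Ioi_of_hasDerivAt_of_nonneg' (FH_deriv hε)
    (fun x hx => qdensH_nonneg hu.le hε.le (le_of_lt hx)) (FH_tendsto hε)]
  have h2 : ((0:ℝ) - u) / ε = -(u / ε) := by ring
  have h3 : ((0:ℝ) - (-u)) / ε = u / ε := by ring
  rw [FH, h2, h3, Real.arctan_neg]
  have hεne : ε ≠ 0 := hε.ne'
  field_simp
  ring

private def FV (u ε : ℝ) (s : ℝ) : ℝ :=
  (u / Real.pi) * (u⁻¹ * Real.arctan ((s - ε) / u) - u⁻¹ * Real.arctan ((s - (-ε)) / u))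

private lemma FV_deriv (hu : 0 < u) : ∀ x ∈ Ici (0:ℝ),
    HasDerivAt (fun s => FV u ε s) (qdensV u ε x) x := by
  intro x _
  have h := ((hasDerivAt_atanK hu ε x).sub (hasDerivAt_atanK hu (-ε) x)).const_mul
    (u / Real.pi)
  rw [qdensV_eq hu]
  have hx : ∀ y : ℝ, y - (-ε) = y + ε := fun y => by ring
  simp only [FV, hx]
  simpa [hx] using h

private lemma FV_tendsto (hu : 0 < u) :
    Tendsto (fun s => FV u ε s) atTop (𝓝 0) := by
  have h := ((tendsto_atanK hu ε).sub (tendsto_atanK hu (-ε))).const_mul (u / Real.pi)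
  simpa [FV] using h

lemma integrableOn_qdensV (hu : 0 < u) (hε : 0 < ε) :
    IntegrableOn (qdensV u ε) (Ioi 0) :=
  integrableOn_Ioi_deriv_of_nonneg' (FV_deriv hu)
    (fun x hx => qdensV_nonneg hu.le hε.le (le_of_lt hx)) (FV_tendsto hu)

lemma integral_qdensV (hu : 0 < u) (hε : 0 < ε) :
    ∫ s in Ioi (0:ℝ), qdensV u ε s = (2 / Real.pi) * Real.arctan (ε / u) := by
  rw [integral_Ioi_of_hasDerivAt_of_nonneg' (FV_deriv hu)
    (fun x hx => qdensV_nonneg hu.le hε.le (le_of_lt hx)) (FV_tendsto hu)]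
  have h2 : ((0:ℝ) - ε) / u = -(ε / u) := by ring
  have h3 : ((0:ℝ) - (-ε)) / u = ε / u := by ring
  rw [FV, h2, h3, Real.arctan_neg]
  have hune : u ≠ 0 := hu.ne'
  field_simp
  ring

lemma sum_arctan (hu : 0 < u) (hε : 0 < ε) :
    (2 / Real.pi) * Real.arctan (u / ε) + (2 / Real.pi) * Real.arctan (ε / u) = 1 := by
  have h1 : ε / u = (u / ε)⁻¹ := by
    field_simp
  have h2 : 0 < u / ε := by positivity
  rw [h1, Real.arctan_inv_of_pos h2]
  have := Real.pi_ne_zero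
  field_simp
  ring

private def FM (u ε : ℝ) (s : ℝ) : ℝ :=
  (ε / Real.pi) * (((1:ℝ)/2) * Real.log ((s - u)^2 + ε^2) - ((1:ℝ)/2) * Real.log ((s - (-u))^2 + ε^2)
    + u * (ε⁻¹ * Real.arctan ((s - u) / ε)) + u * (ε⁻¹ * Real.arctan ((s - (-u)) / ε)))

private lemma FM_deriv (hε : 0 < ε) : ∀ x ∈ Ici (0:ℝ),
    HasDerivAt (fun s => FM u ε s) (x * qdensH u ε x) x := by
  intro x _
  have h := ((((hasDerivAt_logK hε u x).sub (hasDerivAt_logK hε (-u) x)).add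
    ((hasDerivAt_atanK hε u x).const_mul u)).add
    ((hasDerivAt_atanK hε (-u) x).const_mul u)).const_mul (ε / Real.pi)
  have hA : (0:ℝ) < (x - u) ^ 2 + ε ^ 2 := by positivity
  have hB : (0:ℝ) < (x - (-u)) ^ 2 + ε ^ 2 := by positivity
  have heq : (ε / Real.pi) * ((x - u) / ((x - u)^2 + ε^2) - (x - (-u)) / ((x - (-u))^2 + ε^2)
      + u * ((x - u)^2 + ε^2)⁻¹ + u * ((x - (-u))^2 + ε^2)⁻¹) = x * qdensH u ε x := by
    rw [qdensH_eq hε]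
    have := Real.pi_ne_zero
    have hB' : (0:ℝ) < (x + u) ^ 2 + ε ^ 2 := by positivity
    have hxu : x - (-u) = x + u := by ring
    rw [hxu]
    field_simp
    ring
  rw [← heq]
  exact h.congr_of_eventuallyEq (Eventually.of_forall fun s => by simp only [FM, Pi.add_apply, Pi.sub_apply]; try ring)

private lemma FM_tendsto (hε : 0 < ε) :
    Tendsto (fun s => FM u ε s) atTop (𝓝 u) := by
  have hlog : Tendsto (fun s : ℝ => ((1:ℝ)/2) * Real.log ((s - u)^2 + ε^2)
      - ((1:ℝ)/2) * Real.log ((s - (-u))^2 + ε^2)) atTop (𝓝 0) := by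
    have hratio : Tendsto (fun s : ℝ => (((s - u)^2 + ε^2) / ((s - (-u))^2 + ε^2))) atTop (𝓝 1) := by
      have hφ : Tendsto (fun t : ℝ => ((1 - u*t)^2 + (ε*t)^2) / ((1 + u*t)^2 + (ε*t)^2))
          (𝓝 0) (𝓝 1) := by
        have hc : ContinuousAt (fun t : ℝ => ((1 - u*t)^2 + (ε*t)^2) / ((1 + u*t)^2 + (ε*t)^2)) 0 := by
          apply ContinuousAt.div
          · fun_prop
          · fun_prop
          · norm_num
        have h0 : ((1 - u*(0:ℝ))^2 + (ε*(0:ℝ))^2) / ((1 + u*(0:ℝ))^2 + (ε*(0:ℝ))^2) = 1 := by norm_num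
        have := hc.tendsto
        rw [h0] at this
        exact this
      have hcomp := hφ.comp tendsto_inv_atTop_zero
      apply hcomp.congr'
      filter_upwards [eventually_gt_atTop (0:ℝ)] with s hs
      have hs' : (s:ℝ) ≠ 0 := hs.ne'
      have hd : ((1 + u*s⁻¹)^2 + (ε*s⁻¹)^2) ≠ 0 := by positivity
      have hB : ((s - (-u))^2 + ε^2) ≠ 0 := by positivity
      simp only [Function.comp]
      rw [div_eq_div_iff hd hB]
      field_simp
      try ring
    have hlog1 : Tendsto (fun s : ℝ => Real.log (((s - u)^2 + ε^2) / ((s - (-u))^2 + ε^2)))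
        atTop (𝓝 0) := by
      have := (Real.continuousAt_log one_ne_zero).tendsto.comp hratio
      simpa [Function.comp_def] using this
    have h2 := hlog1.const_mul ((1:ℝ)/2)
    rw [mul_zero] at h2
    apply h2.congr'
    filter_upwards [eventually_gt_atTop (0:ℝ)] with s hs
    have hA : ((s - u)^2 + ε^2) ≠ 0 := by positivity
    have hB : ((s - (-u))^2 + ε^2) ≠ 0 := by positivity
    rw [Real.log_div hA hB]
    ring
  have hatan1 := (tendsto_atanK hε u).const_mul u
  have hatan2 := (tendsto_atanK hε (-u)).const_mul u
  have h := ((hlog.add hatan1).add hatan2).const_mul (ε / Real.pi)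
  have hπ := Real.pi_ne_zero
  have hεne := hε.ne'
  have hval : (ε / Real.pi) * ((0:ℝ) + u * (ε⁻¹ * (Real.pi / 2)) + u * (ε⁻¹ * (Real.pi / 2))) = u := by
    field_simp
    ring
  rw [hval] at h
  apply h.congr
  intro s
  simp only [FM]
  try ring

lemma integrableOn_moment_qdensH (hu : 0 < u) (hε : 0 < ε) :
    IntegrableOn (fun s => s * qdensH u ε s) (Ioi 0) :=
  integrableOn_Ioi_deriv_of_nonneg' (FM_deriv hε)
    (fun x hx => mul_nonneg (le_of_lt hx) (qdensH_nonneg hu.le hε.le (le_of_lt hx)))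
    (FM_tendsto hε)

lemma integral_moment_qdensH (hu : 0 < u) (hε : 0 < ε) :
    ∫ s in Ioi (0:ℝ), s * qdensH u ε s = u := by
  rw [integral_Ioi_of_hasDerivAt_of_nonneg' (FM_deriv hε)
    (fun x hx => mul_nonneg (le_of_lt hx) (qdensH_nonneg hu.le hε.le (le_of_lt hx)))
    (FM_tendsto hε)]
  have h1 : ((0:ℝ) - u)^2 = (0 - (-u))^2 := by ring
  have h2 : ((0:ℝ) - u) / ε = -(u / ε) := by ring
  have h3 : ((0:ℝ) - (-u)) / ε = u / ε := by ring
  rw [FM, h1, h2, h3, Real.arctan_neg]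
  ring

end FTCkernels

section Freg

variable {f : ℝ × ℝ → ℂ}

lemma contOn_axis1 (hf : MemCl2 f) : ContinuousOn (fun s : ℝ => f (s, 0)) (Ici 0) := by
  have hc : Continuous (fun s : ℝ => (s, (0:ℝ))) := by fun_prop
  apply hf.contOn.comp hc.continuousOn
  intro s hs
  exact Or.inl ⟨hs, rfl⟩

lemma contOn_axis2 (hf : MemCl2 f) : ContinuousOn (fun t : ℝ => f (0, t)) (Ici 0) := by
  have hc : Continuous (fun t : ℝ => ((0:ℝ), t)) := by fun_prop
  apply hf.contOn.comp hc.continuousOn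
  intro s hs
  exact Or.inr ⟨rfl, hs⟩

lemma bounded_axis (g : ℝ → ℂ) (hg : ContinuousOn g (Ici 0)) {L : ℂ}
    (hL : Tendsto g atTop (𝓝 L)) : ∃ C : ℝ, 0 ≤ C ∧ ∀ s, 0 ≤ s → ‖g s‖ ≤ C := by
  have h1 : ∀ᶠ s in atTop, ‖g s‖ ≤ ‖L‖ + 1 := by
    have := hL.norm
    filter_upwards [this.eventually (eventually_le_nhds (by linarith [norm_nonneg L] : ‖L‖ < ‖L‖ + 1))] with s hs
    exact hs
  obtain ⟨M, hM⟩ := h1.exists_forall_of_atTop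
  rcases le_or_gt M 0 with hM0 | hM0
  · refine ⟨‖L‖ + 1, by positivity, fun s hs => hM s (le_trans hM0 hs)⟩
  · have hcomp : IsCompact (Icc (0:ℝ) M) := isCompact_Icc
    obtain ⟨C1, hC1⟩ := hcomp.exists_bound_of_continuousOn (hg.mono (fun x hx => hx.1))
    refine ⟨max C1 (‖L‖ + 1), le_trans (by positivity) (le_max_right _ _), fun s hs => ?_⟩
    rcases le_or_gt s M with h | h
    · exact le_trans (hC1 s ⟨hs, h⟩) (le_max_left _ _)
    · exact le_trans (hM s h.le) (le_max_right _ _)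

/-- A uniform bound for `f` on `E`. -/
lemma bounded_f (hf : MemCl2 f) :
    ∃ C : ℝ, 0 ≤ C ∧ (∀ s, 0 ≤ s → ‖f (s, 0)‖ ≤ C) ∧ (∀ t, 0 ≤ t → ‖f (0, t)‖ ≤ C) := by
  obtain ⟨L, hL1, hL2⟩ := hf.limits
  obtain ⟨C1, hC1, h1⟩ := bounded_axis _ (contOn_axis1 hf) hL1
  obtain ⟨C2, hC2, h2⟩ := bounded_axis _ (contOn_axis2 hf) hL2
  exact ⟨max C1 C2, le_trans hC1 (le_max_left _ _),
    fun s hs => le_trans (h1 s hs) (le_max_left _ _),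
    fun t ht => le_trans (h2 t ht) (le_max_right _ _)⟩

lemma hasDerivAt_axis1 (hf : MemCl2 f) {t : ℝ} (ht : 0 < t) :
    HasDerivAt (fun s : ℝ => f (s, 0)) (d1 f t) t := by
  have h := (hf.diff1 t ht.le).hasDerivWithinAt
  exact h.hasDerivAt (Ici_mem_nhds ht)

lemma bdd2_nonneg (hf : MemCl2 f) : ∃ C : ℝ, 0 ≤ C ∧
    ∀ r : ℝ, 0 < r → r * (‖deriv (d1 f) r‖ + ‖deriv (d2 f) r‖) ≤ C := by
  obtain ⟨C, hC⟩ := hf.bdd2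
  refine ⟨C, ?_, hC⟩
  have := hC 1 one_pos
  have h0 : (0:ℝ) ≤ 1 * (‖deriv (d1 f) 1‖ + ‖deriv (d2 f) 1‖) := by positivity
  linarith

/-- Second-order Taylor bound near `u` on the horizontal axis. -/
lemma taylor_bound (hf : MemCl2 f) {u : ℝ} (hu : 0 < u) :
    ∃ K : ℝ, 0 ≤ K ∧ ∀ v, u/2 ≤ v → v ≤ 3*u/2 →
      ‖f (v, 0) - f (u, 0) - ((v - u : ℝ) : ℂ) * d1 f u‖ ≤ K * (v - u)^2 := by
  obtain ⟨C, hC0, hC⟩ := bdd2_nonneg hf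
  set K := 2 * C / u with hK
  have hK0 : 0 ≤ K := by positivity
  refine ⟨K, hK0, fun v hv1 hv2 => ?_⟩
  have hsub : Icc (u/2) (3*u/2) ⊆ Ici (0:ℝ) := fun x hx => le_trans (by linarith) hx.1
  have huI : u ∈ Icc (u/2) (3*u/2) := ⟨by linarith, by linarith⟩
  have hvI : v ∈ Icc (u/2) (3*u/2) := ⟨hv1, hv2⟩
  -- Lipschitz bound for d1 f on the interval
  have hlip : ∀ x ∈ Icc (u/2) (3*u/2), ∀ y ∈ Icc (u/2) (3*u/2),
      ‖d1 f y - d1 f x‖ ≤ K * ‖y - x‖ := by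
    intro x hx y hy
    apply (convex_Icc _ _).norm_image_sub_le_of_norm_hasDerivWithin_le
      (f' := fun t => deriv (d1 f) t) ?_ ?_ hx hy
    · intro t ht
      have htpos : 0 < t := lt_of_lt_of_le (by linarith) ht.1
      exact (hf.diff11 t htpos).hasDerivAt.hasDerivWithinAt
    · intro t ht
      have htpos : 0 < t := lt_of_lt_of_le (by linarith) ht.1
      have h1 := hC t htpos
      have h2 : t * ‖deriv (d1 f) t‖ ≤ C := by
        have : (0:ℝ) ≤ t * ‖deriv (d2 f) t‖ := by positivity
        nlinarith [norm_nonneg (deriv (d1 f) t), norm_nonneg (deriv (d2 f) t)]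
      have hKt : ‖deriv (d1 f) t‖ ≤ C / t := by
        rw [le_div_iff₀ htpos]
        linarith [h2]
      apply le_trans hKt
      rw [hK, div_le_div_iff₀ htpos hu]
      nlinarith [ht.1]
  -- FTC on [u, v]
  have hderiv : ∀ t ∈ uIcc u v, HasDerivAt (fun s : ℝ => f (s, 0)) (d1 f t) t := by
    intro t ht
    have : uIcc u v ⊆ Icc (u/2) (3*u/2) := uIcc_subset_Icc huI hvI
    have ht' := this ht
    exact hasDerivAt_axis1 hf (lt_of_lt_of_le (by linarith) ht'.1)
  have hcont : ContinuousOn (d1 f) (uIcc u v) := by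
    apply hf.contd1.mono
    intro t ht
    have := uIcc_subset_Icc huI hvI ht
    exact le_trans (by linarith) this.1
  have hint : IntervalIntegrable (d1 f) volume u v := hcont.intervalIntegrable
  have hftc : f (v, 0) - f (u, 0) = ∫ t in u..v, d1 f t :=
    (intervalIntegral.integral_eq_sub_of_hasDerivAt hderiv hint).symm
  have hconst : ((v - u : ℝ) : ℂ) * d1 f u = ∫ t in u..v, d1 f u := by
    rw [intervalIntegral.integral_const]
    rw [Complex.real_smul]
  have hdiff : f (v, 0) - f (u, 0) - ((v - u : ℝ) : ℂ) * d1 f u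
      = ∫ t in u..v, (d1 f t - d1 f u) := by
    rw [hftc, hconst, intervalIntegral.integral_sub hint]
    exact intervalIntegrable_const
  rw [hdiff]
  have hbound : ∀ t ∈ uIoc u v, ‖d1 f t - d1 f u‖ ≤ K * |v - u| := by
    intro t ht
    have htI : t ∈ Icc (u/2) (3*u/2) := uIcc_subset_Icc huI hvI (uIoc_subset_uIcc ht)
    have := hlip u huI t htI
    apply le_trans this
    have h1 : ‖t - u‖ ≤ |v - u| := by
      rw [Real.norm_eq_abs]
      rcases le_or_gt u v with h | h
      · rw [uIoc_of_le h] at ht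
        rw [abs_of_nonneg (by linarith [ht.1.le] : (0:ℝ) ≤ t - u),
          abs_of_nonneg (by linarith : (0:ℝ) ≤ v - u)]
        linarith [ht.2]
      · rw [uIoc_of_ge h.le] at ht
        rw [abs_of_nonpos (by linarith [ht.2] : t - u ≤ 0),
          abs_of_nonpos (by linarith : v - u ≤ 0)]
        linarith [ht.1]
    exact mul_le_mul_of_nonneg_left h1 hK0
  have := intervalIntegral.norm_integral_le_of_norm_le_const hbound
  apply le_trans this
  have habs : |v - u| * |v - u| = (v - u)^2 := by
    rw [← abs_mul, abs_of_nonneg (mul_self_nonneg (v-u))]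
    ring
  calc K * |v - u| * |v - u| = K * (|v - u| * |v - u|) := by ring
    _ = K * (v - u)^2 := by rw [habs]
    _ ≤ K * (v - u)^2 := le_rfl

end Freg

section NuIntegrand

/-- Horizontal density of `ν`. -/
def wH (s : ℝ) : ℝ := (4 / Real.pi) * s / ((1 - s) ^ 2 * (1 + s) ^ 2)

/-- Vertical density of `ν`. -/
def wV (t : ℝ) : ℝ := (4 / Real.pi) * t / (1 + t ^ 2) ^ 2

lemma nuMeas_eq' : nuMeas = axisMeas wH wV := rfl

lemma measurable_wH : Measurable wH := by
  unfold wH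
  exact (measurable_const.mul measurable_id).div
    (((measurable_const.sub measurable_id).pow_const 2).mul
      ((measurable_const.add measurable_id).pow_const 2))

lemma measurable_wV : Measurable wV := by
  unfold wV
  exact (measurable_const.mul measurable_id).div
    ((measurable_const.add (measurable_id.pow_const 2)).pow_const 2)

lemma wH_nonneg {s : ℝ} (hs : 0 ≤ s) : 0 ≤ wH s := by
  unfold wH
  have := Real.pi_pos
  positivity

lemma wV_nonneg {t : ℝ} (ht : 0 ≤ t) : 0 ≤ wV t := by
  unfold wV
  have := Real.pi_pos
  positivity

/-- The integrand of the `ν`-integral in `G₂`, on the horizontal axis (scaled variable). -/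
def gfun (f : ℝ × ℝ → ℂ) (u s : ℝ) : ℂ :=
  f (u • ((s : ℝ), (0 : ℝ))) - f (u, 0) - ((u * (s - 1) : ℝ) : ℂ) * d1 f u

/-- The integrand of the `ν`-integral in `G₂`, on the vertical axis (scaled variable). -/
def hfun (f : ℝ × ℝ → ℂ) (u t : ℝ) : ℂ :=
  f (u • ((0 : ℝ), (t : ℝ))) - f (u, 0) - ((u * ((0:ℝ) - 1) : ℝ) : ℂ) * d1 f u

lemma gfun_eq (f : ℝ × ℝ → ℂ) (u s : ℝ) :
    gfun f u s = f (u * s, 0) - f (u, 0) - ((u * (s - 1) : ℝ) : ℂ) * d1 f u := by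
  simp [gfun, Prod.smul_mk, smul_eq_mul]

lemma hfun_eq (f : ℝ × ℝ → ℂ) (u t : ℝ) :
    hfun f u t = f (0, u * t) - f (u, 0) + (u : ℂ) * d1 f u := by
  simp only [hfun, Prod.smul_mk, smul_eq_mul, mul_zero]
  push_cast
  ring

variable {f : ℝ × ℝ → ℂ} {u : ℝ}

lemma contOn_gfun (hf : MemCl2 f) (hu : 0 < u) : ContinuousOn (gfun f u) (Ici 0) := by
  have h1 : ContinuousOn (fun s : ℝ => f (u * s, 0)) (Ici 0) := by
    apply (contOn_axis1 hf).comp (continuous_const.mul continuous_id).continuousOn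
    intro s hs
    exact mul_nonneg hu.le hs
  have : ContinuousOn (fun s : ℝ => f (u * s, 0) - f (u, 0) - ((u * (s - 1) : ℝ) : ℂ) * d1 f u)
      (Ici 0) := by
    apply ContinuousOn.sub (h1.sub continuousOn_const)
    apply ContinuousOn.mul ?_ continuousOn_const
    have : Continuous (fun s : ℝ => ((u * (s - 1) : ℝ) : ℂ)) := by fun_prop
    exact this.continuousOn
  exact this.congr fun s _ => gfun_eq f u s

lemma contOn_hfun (hf : MemCl2 f) (hu : 0 < u) : ContinuousOn (hfun f u) (Ici 0) := by
  have h1 : ContinuousOn (fun t : ℝ => f (0, u * t)) (Ici 0) := by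
    apply (contOn_axis2 hf).comp (continuous_const.mul continuous_id).continuousOn
    intro s hs
    exact mul_nonneg hu.le hs
  have : ContinuousOn (fun t : ℝ => f (0, u * t) - f (u, 0) + (u : ℂ) * d1 f u) (Ici 0) :=
    ContinuousOn.add (h1.sub continuousOn_const) continuousOn_const
  exact this.congr fun s _ => hfun_eq f u s

/-- Global bound for `gfun`. -/
lemma gfun_bound (hf : MemCl2 f) (hu : 0 < u) {Cf : ℝ}
    (hCf : ∀ s, 0 ≤ s → ‖f (s, 0)‖ ≤ Cf) {s : ℝ} (hs : 0 ≤ s) :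
    ‖gfun f u s‖ ≤ 2 * Cf + (u * ‖d1 f u‖) * |s - 1| := by
  rw [gfun_eq]
  have h1 : ‖f (u * s, 0)‖ ≤ Cf := hCf _ (mul_nonneg hu.le hs)
  have h2 : ‖f (u, 0)‖ ≤ Cf := hCf _ hu.le
  have h3 : ‖((u * (s - 1) : ℝ) : ℂ) * d1 f u‖ = (u * |s - 1|) * ‖d1 f u‖ := by
    rw [norm_mul, Complex.norm_real, Real.norm_eq_abs, abs_mul, abs_of_nonneg hu.le]
  calc ‖f (u * s, 0) - f (u, 0) - ((u * (s - 1) : ℝ) : ℂ) * d1 f u‖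
      ≤ ‖f (u * s, 0) - f (u, 0)‖ + ‖((u * (s - 1) : ℝ) : ℂ) * d1 f u‖ := norm_sub_le _ _
    _ ≤ (‖f (u * s, 0)‖ + ‖f (u, 0)‖) + (u * |s - 1|) * ‖d1 f u‖ := by
        rw [h3]; exact add_le_add (norm_sub_le _ _) le_rfl
    _ ≤ 2 * Cf + (u * ‖d1 f u‖) * |s - 1| := by
        have : (u * |s - 1|) * ‖d1 f u‖ = (u * ‖d1 f u‖) * |s - 1| := by ring
        rw [this]
        have := abs_nonneg (s - 1)
        nlinarith [h1, h2]

lemma hfun_bound (hf : MemCl2 f) (hu : 0 < u) {Cf : ℝ}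
    (hCf1 : ∀ s, 0 ≤ s → ‖f (s, 0)‖ ≤ Cf) (hCf2 : ∀ t, 0 ≤ t → ‖f (0, t)‖ ≤ Cf)
    {t : ℝ} (ht : 0 ≤ t) :
    ‖hfun f u t‖ ≤ 2 * Cf + u * ‖d1 f u‖ := by
  rw [hfun_eq]
  have h1 : ‖f (0, u * t)‖ ≤ Cf := hCf2 _ (mul_nonneg hu.le ht)
  have h2 : ‖f (u, 0)‖ ≤ Cf := hCf1 _ hu.le
  have h3 : ‖(u : ℂ) * d1 f u‖ = u * ‖d1 f u‖ := by
    rw [norm_mul, Complex.norm_real, Real.norm_eq_abs, abs_of_nonneg hu.le]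
  calc ‖f (0, u * t) - f (u, 0) + (u : ℂ) * d1 f u‖
      ≤ ‖f (0, u * t) - f (u, 0)‖ + ‖(u : ℂ) * d1 f u‖ := norm_add_le _ _
    _ ≤ (‖f (0, u * t)‖ + ‖f (u, 0)‖) + u * ‖d1 f u‖ := by
        rw [h3]; exact add_le_add (norm_sub_le _ _) le_rfl
    _ ≤ 2 * Cf + u * ‖d1 f u‖ := by linarith

/-- Local second-order bound for `gfun`. -/
lemma gfun_bound_local (hf : MemCl2 f) (hu : 0 < u) :
    ∃ K : ℝ, 0 ≤ K ∧ ∀ s : ℝ, 1/2 ≤ s → s ≤ 3/2 → ‖gfun f u s‖ ≤ K * u^2 * (s - 1)^2 := by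
  obtain ⟨K, hK0, hK⟩ := taylor_bound hf hu
  refine ⟨K, hK0, fun s h1 h2 => ?_⟩
  have hv1 : u/2 ≤ u * s := by nlinarith
  have hv2 : u * s ≤ 3*u/2 := by nlinarith
  have := hK (u * s) hv1 hv2
  have heq : gfun f u s = f (u * s, 0) - f (u, 0) - ((u * s - u : ℝ) : ℂ) * d1 f u := by
    rw [gfun_eq]
    have : ((u * (s - 1) : ℝ) : ℂ) = ((u * s - u : ℝ) : ℂ) := by
      push_cast; ring
    rw [this]
  rw [heq]
  apply le_trans this
  apply le_of_eq
  ring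

end NuIntegrand

section IntegrabilityNu

variable {f : ℝ × ℝ → ℂ} {u : ℝ}

lemma integrableOn_inv_sq {c : ℝ} (hc : 0 ≤ c) {a : ℝ} (ha : 0 < a) :
    IntegrableOn (fun x : ℝ => c / x ^ 2) (Ioi a) := by
  have hder : ∀ x ∈ Ici a, HasDerivAt (fun x : ℝ => -c * x⁻¹) (c / x ^ 2) x := by
    intro x hx
    have hxpos : 0 < x := lt_of_lt_of_le ha hx
    have h := (hasDerivAt_inv hxpos.ne').const_mul (-c)
    refine h.congr_deriv ?_
    field_simp
  have htend : Tendsto (fun x : ℝ => -c * x⁻¹) atTop (𝓝 0) := by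
    have := tendsto_inv_atTop_zero.const_mul (-c)
    simpa using this
  exact integrableOn_Ioi_deriv_of_nonneg' hder
    (fun x hx => by positivity) htend

lemma integrableOn_wV : IntegrableOn wV (Ioi 0) := by
  have hder : ∀ x ∈ Ici (0:ℝ), HasDerivAt (fun t : ℝ => -(2/Real.pi) * (1 + t^2)⁻¹) (wV x) x := by
    intro x _
    have hpos : (0:ℝ) < 1 + x^2 := by positivity
    have hin : HasDerivAt (fun t : ℝ => 1 + t^2) (2*x) x := by
      have := ((hasDerivAt_id x).pow 2).const_add (1:ℝ)
      simpa [mul_comm] using this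
    have h := ((hasDerivAt_inv hpos.ne').comp x hin).const_mul (-(2/Real.pi))
    refine h.congr_deriv ?_
    unfold wV
    have hπ := Real.pi_ne_zero
    field_simp
    ring
  have htend : Tendsto (fun t : ℝ => -(2/Real.pi) * (1 + t^2)⁻¹) atTop (𝓝 0) := by
    have h1 : Tendsto (fun t : ℝ => 1 + t^2) atTop atTop := by
      apply tendsto_atTop_add_const_left
      exact tendsto_pow_atTop (by norm_num)
    have := (tendsto_inv_atTop_zero.comp h1).const_mul (-(2/Real.pi))
    simpa [Function.comp] using this
  exact integrableOn_Ioi_deriv_of_nonneg' hder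
    (fun x hx => wV_nonneg (le_of_lt hx)) htend

lemma aesm_wg (hf : MemCl2 f) (hu : 0 < u) :
    AEStronglyMeasurable (fun s => wH s • gfun f u s) μ0 :=
  (measurable_wH.aestronglyMeasurable).smul
    ((contOn_gfun hf hu).aestronglyMeasurable measurableSet_Ici)

lemma aesm_wh (hf : MemCl2 f) (hu : 0 < u) :
    AEStronglyMeasurable (fun t => wV t • hfun f u t) μ0 :=
  (measurable_wV.aestronglyMeasurable).smul
    ((contOn_hfun hf hu).aestronglyMeasurable measurableSet_Ici)

lemma integrable_wg (hf : MemCl2 f) (hu : 0 < u) :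
    Integrable (fun s => wH s • gfun f u s) μ0 := by
  obtain ⟨Cf, hCf0, hCf1, hCf2⟩ := bounded_f hf
  obtain ⟨K, hK0, hK⟩ := gfun_bound_local hf hu
  have hπ : (0:ℝ) < Real.pi := Real.pi_pos
  set B : ℝ := 2 * Cf + u * ‖d1 f u‖ with hB
  have hB0 : 0 ≤ B := by positivity
  have hgb : ∀ s : ℝ, 0 ≤ s → ‖gfun f u s‖ ≤ 2 * Cf + (u * ‖d1 f u‖) * |s - 1| :=
    fun s hs => gfun_bound hf hu hCf1 hs
  have hres : (μ0 : Measure ℝ) = μ0.restrict (Ici 0) := by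
    rw [Measure.restrict_restrict measurableSet_Ici, inter_self]
  rw [hres]
  have hsub : Ici (0:ℝ) ⊆ Icc 0 (3/2) ∪ Ioi (3/2) := by
    intro x hx
    rcases le_or_gt x (3/2) with h | h
    · exact Or.inl ⟨hx, h⟩
    · exact Or.inr h
  have haesm := aesm_wg hf hu
  refine IntegrableOn.mono_set (IntegrableOn.union ?_ ?_) hsub
  · -- bounded on [0, 3/2]
    apply Measure.integrableOn_of_bounded (M := (8/Real.pi) * B + K * u^2 * (1/Real.pi))
    · filter_upwards [ae_restrict_mem measurableSet_Icc] with s hs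
      have hs0 : (0:ℝ) ≤ s := hs.1
      have hs32 : s ≤ 3/2 := hs.2
      have hnorm : ‖wH s • gfun f u s‖ = wH s * ‖gfun f u s‖ := by
        rw [norm_smul, Real.norm_eq_abs, abs_of_nonneg (wH_nonneg hs0)]
      rw [hnorm]
      have hM2 : (0:ℝ) ≤ K * u^2 * (1/Real.pi) := by positivity
      have hM1 : (0:ℝ) ≤ (8/Real.pi) * B := by positivity
      rcases le_or_gt s (1/2) with h12 | h12
      · -- wH ≤ 8/π and ‖g‖ ≤ B
        have hwb : wH s ≤ 8/Real.pi := by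
          unfold wH
          have hden : (1/4 : ℝ) ≤ (1 - s)^2 * (1 + s)^2 := by
            have h1 : (1/4:ℝ) ≤ (1-s)^2 := by nlinarith
            have h2 : (1:ℝ) ≤ (1+s)^2 := by nlinarith
            calc (1/4 : ℝ) = (1/4) * 1 := by ring
              _ ≤ (1-s)^2 * (1+s)^2 := mul_le_mul h1 h2 (by norm_num) (by positivity)
          have hnum : (4/Real.pi) * s ≤ 2/Real.pi := by
            rw [div_mul_eq_mul_div, div_le_div_iff₀ hπ hπ]
            nlinarith
          calc (4/Real.pi) * s / ((1 - s)^2 * (1 + s)^2) ≤ (2/Real.pi) / (1/4 : ℝ) := by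
                apply div_le_div₀ (by positivity) hnum (by norm_num) hden
            _ = 8/Real.pi := by ring
        have hgB : ‖gfun f u s‖ ≤ B := by
          have := hgb s hs0
          have habs : |s - 1| ≤ 1 := by
            rw [abs_le]; constructor <;> linarith
          have : ‖gfun f u s‖ ≤ 2 * Cf + (u * ‖d1 f u‖) * 1 := by
            apply le_trans this
            apply add_le_add_right
            exact mul_le_mul_of_nonneg_left habs (by positivity)
          simpa [hB] using this
        calc wH s * ‖gfun f u s‖ ≤ (8/Real.pi) * B := by
              apply mul_le_mul hwb hgB (norm_nonneg _) (by positivity)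
          _ ≤ (8/Real.pi) * B + K * u^2 * (1/Real.pi) := by linarith
      · -- second-order region
        by_cases hs1 : s = 1
        · subst hs1
          have : gfun f u 1 = 0 := by
            rw [gfun_eq]
            simp
          rw [this]
          simp only [norm_zero, mul_zero]
          linarith
        · have hglocal := hK s (by linarith) hs32
          have hne : (s - 1)^2 ≠ 0 := by
            intro hcon
            apply hs1
            have := pow_eq_zero_iff (n := 2) (by norm_num) |>.1 hcon
            linarith
          have hfact : wH s * (s-1)^2 = (4/Real.pi) * s / (1+s)^2 := by
            unfold wH
            have h1s : (1 - s)^2 = (s - 1)^2 := by ring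
            rw [h1s]
            have h1pne : ((1:ℝ)+s)^2 ≠ 0 := by positivity
            field_simp
          have hfle : wH s * (s-1)^2 ≤ 1/Real.pi := by
            rw [hfact]
            rw [div_le_div_iff₀ (by positivity) hπ]
            have h4s : 4 * s ≤ (1+s)^2 := by nlinarith
            calc (4/Real.pi) * s * Real.pi = 4 * s := by field_simp
              _ ≤ (1+s)^2 := h4s
              _ = 1 * (1+s)^2 := by ring
          calc wH s * ‖gfun f u s‖ ≤ wH s * (K * u^2 * (s-1)^2) := by
                apply mul_le_mul_of_nonneg_left hglocal (wH_nonneg hs0)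
            _ = K * u^2 * (wH s * (s-1)^2) := by ring
            _ ≤ K * u^2 * (1/Real.pi) := by
                apply mul_le_mul_of_nonneg_left hfle (by positivity)
            _ ≤ (8/Real.pi) * B + K * u^2 * (1/Real.pi) := by linarith
    · show μ0 (Icc (0:ℝ) (3/2)) ≠ ⊤
      have h1 : μ0 (Icc (0:ℝ) (3/2)) ≤ volume (Icc (0:ℝ) (3/2)) :=
        Measure.restrict_apply_le (Ici 0) (Icc 0 (3/2))
      exact (lt_of_le_of_lt h1 measure_Icc_lt_top).ne
    · exact haesm
  · -- decay at infinity
    have hmaj : Integrable (fun x : ℝ => (36/Real.pi) * B / x ^ 2)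
        (μ0.restrict (Ioi (3/2 : ℝ))) := by
      have h1 : IntegrableOn (fun x : ℝ => (36/Real.pi) * B / x ^ 2) (Ioi (3/2 : ℝ)) volume :=
        integrableOn_inv_sq (by positivity) (by norm_num : (0:ℝ) < 3/2)
      have hle : μ0.restrict (Ioi (3/2 : ℝ)) ≤ volume.restrict (Ioi (3/2 : ℝ)) :=
        Measure.restrict_mono (subset_refl _) Measure.restrict_le_self
      exact Integrable.mono_measure h1 hle
    apply Integrable.mono' hmaj
    · exact haesm.mono_measure Measure.restrict_le_self
    · filter_upwards [ae_restrict_mem measurableSet_Ioi] with s hs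
      have hs32 : (3/2 : ℝ) < s := hs
      have hs0 : (0:ℝ) < s := by linarith
      have hnorm : ‖wH s • gfun f u s‖ = wH s * ‖gfun f u s‖ := by
        rw [norm_smul, Real.norm_eq_abs, abs_of_nonneg (wH_nonneg hs0.le)]
      rw [hnorm]
      have hwb : wH s ≤ 36 / (Real.pi * s^3) := by
        unfold wH
        have hden : s^4/9 ≤ (1 - s)^2 * (1 + s)^2 := by nlinarith
        calc (4/Real.pi) * s / ((1 - s)^2 * (1 + s)^2) ≤ (4/Real.pi) * s / (s^4/9) := by
              apply div_le_div_of_nonneg_left (by positivity) (by positivity) hden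
          _ = 36 / (Real.pi * s^3) := by
              field_simp
              ring
      have hgB : ‖gfun f u s‖ ≤ B * s := by
        have := hgb s hs0.le
        apply le_trans this
        have habs : |s - 1| = s - 1 := abs_of_nonneg (by linarith)
        rw [habs, hB]
        nlinarith [norm_nonneg (d1 f u), hCf0]
      calc wH s * ‖gfun f u s‖ ≤ (36 / (Real.pi * s^3)) * (B * s) := by
            apply mul_le_mul hwb hgB (norm_nonneg _) (by positivity)
        _ = (36/Real.pi) * B / s^2 := by
            field_simp

lemma integrable_wh (hf : MemCl2 f) (hu : 0 < u) :
    Integrable (fun t => wV t • hfun f u t) μ0 := by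
  obtain ⟨Cf, hCf0, hCf1, hCf2⟩ := bounded_f hf
  set B : ℝ := 2 * Cf + u * ‖d1 f u‖ with hB
  have hB0 : 0 ≤ B := by positivity
  have hwVint : IntegrableOn wV (Ici 0) := by
    rw [integrableOn_Ici_iff_integrableOn_Ioi]
    exact integrableOn_wV
  apply Integrable.mono' (hwVint.const_mul B) (aesm_wh hf hu)
  filter_upwards [ae_restrict_mem measurableSet_Ici] with t ht
  have hnorm : ‖wV t • hfun f u t‖ = wV t * ‖hfun f u t‖ := by
    rw [norm_smul, Real.norm_eq_abs, abs_of_nonneg (wV_nonneg ht)]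
  rw [hnorm]
  have := hfun_bound hf hu hCf1 hCf2 ht
  calc wV t * ‖hfun f u t‖ ≤ wV t * B :=
        mul_le_mul_of_nonneg_left this (wV_nonneg ht)
    _ = B * wV t := by ring

/-- Part 1 of the theorem: the `ν`-integrand is integrable. -/
lemma nu_integrable (hf : MemCl2 f) (hu : 0 < u) :
    Integrable (fun y : ℝ × ℝ =>
      f (u • y) - f (u, 0) - ((u * (y.1 - 1) : ℝ) : ℂ) * d1 f u) nuMeas := by
  rw [nuMeas_eq']
  rw [integrable_axisMeas_iff measurable_wH measurable_wV
    (fun s hs => wH_nonneg hs) (fun t ht => wV_nonneg ht)]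
  constructor
  · exact integrable_wg hf hu
  · exact integrable_wh hf hu

end IntegrabilityNu

section Qside

variable {f : ℝ × ℝ → ℂ} {u ε : ℝ}

lemma measurable_qdensH (u ε : ℝ) : Measurable (qdensH u ε) := by
  unfold qdensH
  apply Measurable.div
  · fun_prop
  · fun_prop

lemma measurable_qdensV (u ε : ℝ) : Measurable (qdensV u ε) := by
  unfold qdensV
  apply Measurable.div
  · fun_prop
  · fun_prop

/-- Unscaled compensated horizontal integrand. -/
def gtil (f : ℝ × ℝ → ℂ) (u s : ℝ) : ℂ :=
  f (s, 0) - f (u, 0) - ((s - u : ℝ) : ℂ) * d1 f u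

/-- Unscaled compensated vertical integrand. -/
def htil (f : ℝ × ℝ → ℂ) (u t : ℝ) : ℂ :=
  f (0, t) - f (u, 0) + (u : ℂ) * d1 f u

lemma gtil_scale (f : ℝ × ℝ → ℂ) (u s : ℝ) : gtil f u (u * s) = gfun f u s := by
  rw [gtil, gfun_eq]
  have : ((u * s - u : ℝ) : ℂ) = ((u * (s - 1) : ℝ) : ℂ) := by push_cast; ring
  rw [this]

lemma htil_scale (f : ℝ × ℝ → ℂ) (u t : ℝ) : htil f u (u * t) = hfun f u t := by
  rw [htil, hfun_eq]

/-- Integrability of `f` against the exit law `Q`. -/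
lemma integrable_f_Q (hf : MemCl2 f) (hu : 0 < u) (hε : 0 < ε) :
    Integrable f (axisMeas (qdensH u ε) (qdensV u ε)) := by
  obtain ⟨Cf, hCf0, hCf1, hCf2⟩ := bounded_f hf
  rw [integrable_axisMeas_iff (measurable_qdensH u ε) (measurable_qdensV u ε)
    (fun s hs => qdensH_nonneg hu.le hε.le hs) (fun t ht => qdensV_nonneg hu.le hε.le ht)]
  constructor
  · have hint : IntegrableOn (qdensH u ε) (Ici 0) := by
      rw [integrableOn_Ici_iff_integrableOn_Ioi]
      exact integrableOn_qdensH hu hε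
    apply Integrable.mono' (hint.const_mul Cf)
    · exact ((measurable_qdensH u ε).aestronglyMeasurable).smul
        ((contOn_axis1 hf).aestronglyMeasurable measurableSet_Ici)
    · filter_upwards [ae_restrict_mem measurableSet_Ici] with s hs
      rw [norm_smul, Real.norm_eq_abs, abs_of_nonneg (qdensH_nonneg hu.le hε.le hs)]
      calc qdensH u ε s * ‖f (s, 0)‖ ≤ qdensH u ε s * Cf :=
            mul_le_mul_of_nonneg_left (hCf1 s hs) (qdensH_nonneg hu.le hε.le hs)
        _ = Cf * qdensH u ε s := by ring
  · have hint : IntegrableOn (qdensV u ε) (Ici 0) := by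
      rw [integrableOn_Ici_iff_integrableOn_Ioi]
      exact integrableOn_qdensV hu hε
    apply Integrable.mono' (hint.const_mul Cf)
    · exact ((measurable_qdensV u ε).aestronglyMeasurable).smul
        ((contOn_axis2 hf).aestronglyMeasurable measurableSet_Ici)
    · filter_upwards [ae_restrict_mem measurableSet_Ici] with t ht
      rw [norm_smul, Real.norm_eq_abs, abs_of_nonneg (qdensV_nonneg hu.le hε.le ht)]
      calc qdensV u ε t * ‖f (0, t)‖ ≤ qdensV u ε t * Cf :=
            mul_le_mul_of_nonneg_left (hCf2 t ht) (qdensV_nonneg hu.le hε.le ht)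
        _ = Cf * qdensV u ε t := by ring

/-- Representation of the `Q`-integral as two Lebesgue integrals. -/
lemma Qint_repr (hf : MemCl2 f) (hu : 0 < u) (hε : 0 < ε) :
    ∫ z, f z ∂(Qmeas (u, ε)) =
      (∫ s in Ioi (0:ℝ), qdensH u ε s • f (s, 0)) +
      (∫ t in Ioi (0:ℝ), qdensV u ε t • f (0, t)) := by
  rw [Qmeas_eq hu hε]
  exact integral_axisMeas (measurable_qdensH u ε) (measurable_qdensV u ε)
    (fun s hs => qdensH_nonneg hu.le hε.le hs) (fun t ht => qdensV_nonneg hu.le hε.le ht)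
    (integrable_f_Q hf hu hε)

/-- The key algebraic decomposition of the increment. -/
lemma Qdiff (hf : MemCl2 f) (hu : 0 < u) (hε : 0 < ε) :
    (∫ z, f z ∂(Qmeas (u, ε))) - f (u, 0) =
      (∫ s in Ioi (0:ℝ), qdensH u ε s • gtil f u s) +
      (∫ t in Ioi (0:ℝ), qdensV u ε t • htil f u t) := by
  obtain ⟨Cf, hCf0, hCf1, hCf2⟩ := bounded_f hf
  set q := qdensH u ε with hq_def
  set r := qdensV u ε with hr_def
  have hq0 : ∀ s ∈ Ioi (0:ℝ), 0 ≤ q s := fun s hs => qdensH_nonneg hu.le hε.le (le_of_lt hs)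
  have hr0 : ∀ t ∈ Ioi (0:ℝ), 0 ≤ r t := fun t ht => qdensV_nonneg hu.le hε.le (le_of_lt ht)
  -- integrability facts on `Ioi 0`
  have hfQ := (integrable_axisMeas_iff (measurable_qdensH u ε) (measurable_qdensV u ε)
    (fun s hs => qdensH_nonneg hu.le hε.le hs) (fun t ht => qdensV_nonneg hu.le hε.le ht) f).1
    (integrable_f_Q hf hu hε)
  have hqf' : IntegrableOn (fun s => q s • f (s, 0)) (Ici (0:ℝ)) volume := hfQ.1
  have hrf' : IntegrableOn (fun t => r t • f (0, t)) (Ici (0:ℝ)) volume := hfQ.2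
  have hqf : IntegrableOn (fun s => q s • f (s, 0)) (Ioi (0:ℝ)) :=
    hqf'.mono_set Ioi_subset_Ici_self
  have hrf : IntegrableOn (fun t => r t • f (0, t)) (Ioi (0:ℝ)) :=
    hrf'.mono_set Ioi_subset_Ici_self
  have hq_int : IntegrableOn q (Ioi 0) := integrableOn_qdensH hu hε
  have hr_int : IntegrableOn r (Ioi 0) := integrableOn_qdensV hu hε
  have hsq_int : IntegrableOn (fun s => s * q s) (Ioi 0) := integrableOn_moment_qdensH hu hε
  -- pointwise decomposition, horizontal
  have hH : ∀ s : ℝ, q s • f (s, 0) =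
      q s • gtil f u s + q s • f (u, 0) + (s * q s - u * q s) • d1 f u := by
    intro s
    simp only [gtil, smul_sub, smul_add, Complex.real_smul]
    push_cast
    ring
  have hV : ∀ t : ℝ, r t • f (0, t) =
      r t • htil f u t + r t • f (u, 0) - (u * r t) • d1 f u := by
    intro t
    simp only [htil, smul_sub, smul_add, Complex.real_smul]
    push_cast
    ring
  -- integrability of the pieces
  have hq_c1 : IntegrableOn (fun s => q s • f (u, 0)) (Ioi 0) := hq_int.smul_const (f (u, 0))
  have hq_c2 : IntegrableOn (fun s => (s * q s - u * q s) • d1 f u) (Ioi 0) :=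
    (hsq_int.sub (hq_int.const_mul u)).smul_const (d1 f u)
  have hqg : IntegrableOn (fun s => q s • gtil f u s) (Ioi 0) := by
    have : (fun s => q s • gtil f u s) = fun s =>
        q s • f (s, 0) - q s • f (u, 0) - (s * q s - u * q s) • d1 f u := by
      funext s
      simp only [gtil, smul_sub, smul_add, Complex.real_smul]
      push_cast
      ring
    rw [this]
    exact (hqf.sub hq_c1).sub hq_c2
  have hr_c1 : IntegrableOn (fun t => r t • f (u, 0)) (Ioi 0) := hr_int.smul_const (f (u, 0))
  have hr_c2 : IntegrableOn (fun t => (u * r t) • d1 f u) (Ioi 0) :=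
    (hr_int.const_mul u).smul_const (d1 f u)
  have hrh : IntegrableOn (fun t => r t • htil f u t) (Ioi 0) := by
    have : (fun t => r t • htil f u t) = fun t =>
        r t • f (0, t) - r t • f (u, 0) + (u * r t) • d1 f u := by
      funext t
      simp only [htil, smul_sub, smul_add, Complex.real_smul]
      push_cast
      ring
    rw [this]
    exact (hrf.sub hr_c1).add hr_c2
  -- split the integrals
  have hIH : ∫ s in Ioi (0:ℝ), q s • f (s, 0) =
      (∫ s in Ioi (0:ℝ), q s • gtil f u s)
        + ((2/Real.pi) * Real.arctan (u/ε)) • f (u, 0)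
        + (u - u * ((2/Real.pi) * Real.arctan (u/ε))) • d1 f u := by
    calc ∫ s in Ioi (0:ℝ), q s • f (s, 0)
        = ∫ s in Ioi (0:ℝ), (q s • gtil f u s + q s • f (u, 0) + (s * q s - u * q s) • d1 f u) :=
          integral_congr_ae (Eventually.of_forall hH)
      _ = (∫ s in Ioi (0:ℝ), (q s • gtil f u s + q s • f (u, 0)))
            + ∫ s in Ioi (0:ℝ), (s * q s - u * q s) • d1 f u :=
          integral_add (hqg.add hq_c1) hq_c2
      _ = ((∫ s in Ioi (0:ℝ), q s • gtil f u s) + (∫ s in Ioi (0:ℝ), q s • f (u, 0)))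
            + ∫ s in Ioi (0:ℝ), (s * q s - u * q s) • d1 f u := by
          congr 1
          exact integral_add hqg hq_c1
      _ = (∫ s in Ioi (0:ℝ), q s • gtil f u s)
            + ((2/Real.pi) * Real.arctan (u/ε)) • f (u, 0)
            + (u - u * ((2/Real.pi) * Real.arctan (u/ε))) • d1 f u := by
          congr 1
          · congr 1
            rw [integral_smul_const, integral_qdensH hu hε]
          · rw [integral_smul_const]
            congr 1
            rw [integral_sub hsq_int (hq_int.const_mul u), integral_moment_qdensH hu hε,
              integral_const_mul, integral_qdensH hu hε]
  have hIV : ∫ t in Ioi (0:ℝ), r t • f (0, t) =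
      (∫ t in Ioi (0:ℝ), r t • htil f u t)
        + ((2/Real.pi) * Real.arctan (ε/u)) • f (u, 0)
        - (u * ((2/Real.pi) * Real.arctan (ε/u))) • d1 f u := by
    calc ∫ t in Ioi (0:ℝ), r t • f (0, t)
        = ∫ t in Ioi (0:ℝ), (r t • htil f u t + r t • f (u, 0) - (u * r t) • d1 f u) :=
          integral_congr_ae (Eventually.of_forall hV)
      _ = (∫ t in Ioi (0:ℝ), (r t • htil f u t + r t • f (u, 0)))
            - ∫ t in Ioi (0:ℝ), (u * r t) • d1 f u :=
          integral_sub (hrh.add hr_c1) hr_c2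
      _ = ((∫ t in Ioi (0:ℝ), r t • htil f u t) + (∫ t in Ioi (0:ℝ), r t • f (u, 0)))
            - ∫ t in Ioi (0:ℝ), (u * r t) • d1 f u := by
          congr 1
          exact integral_add hrh hr_c1
      _ = (∫ t in Ioi (0:ℝ), r t • htil f u t)
            + ((2/Real.pi) * Real.arctan (ε/u)) • f (u, 0)
            - (u * ((2/Real.pi) * Real.arctan (ε/u))) • d1 f u := by
          congr 1
          · congr 1
            rw [integral_smul_const, integral_qdensV hu hε]
          · rw [integral_smul_const]
            congr 1
            rw [integral_const_mul, integral_qdensV hu hε]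
  rw [Qint_repr hf hu hε, hIH, hIV]
  have harc := sum_arctan hu hε
  set aH := (2/Real.pi) * Real.arctan (u/ε) with haH
  set aV := (2/Real.pi) * Real.arctan (ε/u) with haV
  have h1 : aH • f (u, 0) + aV • f (u, 0) - f (u, 0) = 0 := by
    rw [← add_smul, harc, one_smul]
    ring
  have h2 : (u - u * aH) • d1 f u - (u * aV) • d1 f u = 0 := by
    rw [← sub_smul]
    have : u - u * aH - u * aV = 0 := by
      have : aH + aV = 1 := harc
      nlinarith [this]
    rw [this, zero_smul]
  -- final algebra
  have expand : ∀ (A B C D E : ℂ), A + C + D + (B + E - (u * aV) • d1 f u) - f (u,0)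
      = A + B + ((C + E - f (u,0)) + (D - (u * aV) • d1 f u)) := by
    intros; ring
  calc (∫ s in Ioi (0:ℝ), q s • gtil f u s) + aH • f (u, 0) + (u - u * aH) • d1 f u
        + ((∫ t in Ioi (0:ℝ), r t • htil f u t) + aV • f (u, 0) - (u * aV) • d1 f u) - f (u, 0)
      = (∫ s in Ioi (0:ℝ), q s • gtil f u s) + (∫ t in Ioi (0:ℝ), r t • htil f u t)
        + ((aH • f (u, 0) + aV • f (u, 0) - f (u, 0))
          + ((u - u * aH) • d1 f u - (u * aV) • d1 f u)) := by ring
    _ = (∫ s in Ioi (0:ℝ), q s • gtil f u s) + (∫ t in Ioi (0:ℝ), r t • htil f u t) := by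
        rw [h1, h2]
        ring

end Qside

section Limits

variable {f : ℝ × ℝ → ℂ} {u : ℝ}

lemma inv_diff_le {a b ε : ℝ} (ha : a ≠ 0) (hab : a^2 ≤ b^2) :
    (a^2 + ε^2)⁻¹ - (b^2 + ε^2)⁻¹ ≤ (a^2)⁻¹ - (b^2)⁻¹ := by
  have ha2 : (0:ℝ) < a^2 := by positivity
  have hb2 : (0:ℝ) < b^2 := lt_of_lt_of_le ha2 hab
  have hA : (0:ℝ) < a^2 + ε^2 := by positivity
  have hB : (0:ℝ) < b^2 + ε^2 := by positivity
  have e1 : (a^2 + ε^2)⁻¹ - (b^2 + ε^2)⁻¹ = (b^2 - a^2) / ((a^2 + ε^2) * (b^2 + ε^2)) := by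
    field_simp
    try ring
  have e2 : (a^2)⁻¹ - (b^2)⁻¹ = (b^2 - a^2) / (a^2 * b^2) := by
    have hb : b ≠ 0 := fun h => by simp [h] at hb2
    field_simp
    try ring
  rw [e1, e2]
  apply div_le_div_of_nonneg_left (by linarith) (by positivity)
  nlinarith [sq_nonneg ε, sq_nonneg (ε*ε)]

lemma Kker_eq {ε : ℝ} (hu : 0 < u) (hε : 0 < ε) (s : ℝ) :
    (u/ε) * qdensH u ε (u*s)
      = (u/Real.pi) * (((u*s - u)^2 + ε^2)⁻¹ - ((u*s + u)^2 + ε^2)⁻¹) := by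
  rw [qdensH_eq hε]
  have hπ := Real.pi_ne_zero
  field_simp

lemma wH_scaled (hu : 0 < u) {s : ℝ} (hs : 0 < s) (hs1 : s ≠ 1) :
    (u/Real.pi) * (((u*s - u)^2)⁻¹ - ((u*s + u)^2)⁻¹) = u⁻¹ * wH s := by
  unfold wH
  have hπ := Real.pi_ne_zero
  have h1 : u*s - u = u * (s - 1) := by ring
  have h2 : u*s + u = u * (s + 1) := by ring
  have hs1' : s - 1 ≠ 0 := fun h => hs1 (by linarith)
  have hs2' : s + 1 ≠ 0 := by positivity
  have hune := hu.ne'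
  rw [h1, h2]
  have e1 : (1 - s)^2 = (s - 1)^2 := by ring
  rw [e1]
  field_simp
  ring

lemma Kker_le {ε : ℝ} (hu : 0 < u) (hε : 0 < ε) {s : ℝ} (hs : 0 < s) (hs1 : s ≠ 1) :
    (u/ε) * qdensH u ε (u*s) ≤ u⁻¹ * wH s := by
  rw [Kker_eq hu hε]
  have ha : u*s - u ≠ 0 := by
    intro h
    apply hs1
    have : u * (s - 1) = 0 := by linarith [h]
    rcases mul_eq_zero.1 this with h' | h'
    · exact absurd h' hu.ne'
    · linarith
  have hab : (u*s - u)^2 ≤ (u*s + u)^2 := by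
    nlinarith [mul_nonneg (mul_nonneg hu.le hu.le) hs.le]
  calc (u/Real.pi) * (((u*s - u)^2 + ε^2)⁻¹ - ((u*s + u)^2 + ε^2)⁻¹)
      ≤ (u/Real.pi) * (((u*s - u)^2)⁻¹ - ((u*s + u)^2)⁻¹) := by
        apply mul_le_mul_of_nonneg_left (inv_diff_le ha hab)
        have := Real.pi_pos
        positivity
    _ = u⁻¹ * wH s := wH_scaled hu hs hs1

lemma Kker_tendsto (hu : 0 < u) {s : ℝ} (hs : 0 < s) (hs1 : s ≠ 1) :
    Tendsto (fun ε : ℝ => (u/ε) * qdensH u ε (u*s)) (𝓝[>]0) (𝓝 (u⁻¹ * wH s)) := by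
  have ha : (u*s - u)^2 ≠ 0 := by
    have : u*s - u ≠ 0 := by
      intro h
      apply hs1
      have h' : u * (s - 1) = 0 := by linarith [h]
      rcases mul_eq_zero.1 h' with h'' | h''
      · exact absurd h'' hu.ne'
      · linarith
    positivity
  have hb : (u*s + u)^2 ≠ 0 := by positivity
  have hφ : ContinuousAt (fun ε : ℝ =>
      (u/Real.pi) * (((u*s - u)^2 + ε^2)⁻¹ - ((u*s + u)^2 + ε^2)⁻¹)) 0 := by
    apply ContinuousAt.mul continuousAt_const
    apply ContinuousAt.sub
    · apply ContinuousAt.inv₀ (by fun_prop)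
      simpa using ha
    · apply ContinuousAt.inv₀ (by fun_prop)
      simpa using hb
  have h0 : (u/Real.pi) * (((u*s - u)^2 + (0:ℝ)^2)⁻¹ - ((u*s + u)^2 + (0:ℝ)^2)⁻¹)
      = u⁻¹ * wH s := by
    rw [show ((0:ℝ)^2 : ℝ) = 0 by norm_num, add_zero, add_zero]
    exact wH_scaled hu hs hs1
  have htends := hφ.tendsto.mono_left (nhdsWithin_le_nhds (s := Ioi (0:ℝ)))
  rw [h0] at htends
  apply htends.congr'
  filter_upwards [self_mem_nhdsWithin] with ε (hε : 0 < ε)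
  exact (Kker_eq hu hε s).symm

lemma Lker_eq {ε : ℝ} (hu : 0 < u) (hε : 0 < ε) (t : ℝ) :
    (u/ε) * qdensV u ε (u*t)
      = (4*u^3*t/Real.pi) / (((u*t - ε)^2 + u^2) * ((u*t + ε)^2 + u^2)) := by
  rw [qdensV, quartic_factorV]
  have hπ := Real.pi_ne_zero
  have hA : (0:ℝ) < (u*t - ε)^2 + u^2 := by positivity
  have hB : (0:ℝ) < (u*t + ε)^2 + u^2 := by positivity
  field_simp

lemma wV_scaled (hu : 0 < u) (t : ℝ) :
    (4*u^3*t/Real.pi) / ((u*t)^2 + u^2)^2 = u⁻¹ * wV t := by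
  unfold wV
  have hπ := Real.pi_ne_zero
  have hune := hu.ne'
  have h1 : (u*t)^2 + u^2 = u^2 * (t^2 + 1) := by ring
  rw [h1]
  have h2 : (0:ℝ) < t^2 + 1 := by positivity
  field_simp
  ring

lemma Lker_le {ε : ℝ} (hu : 0 < u) (hε : 0 < ε) (hεu : ε ≤ u) {t : ℝ} (ht : 0 ≤ t) :
    (u/ε) * qdensV u ε (u*t) ≤ 5 * (u⁻¹ * wV t) := by
  rw [Lker_eq hu hε]
  set x := u * t with hx
  have hx0 : 0 ≤ x := mul_nonneg hu.le ht
  have hprod : (x^2 + u^2)^2 / 5 ≤ ((x - ε)^2 + u^2) * ((x + ε)^2 + u^2) := by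
    rcases le_or_gt (2*ε) x with hcase | hcase
    · have h1 : (x^2 + u^2)/4 ≤ (x - ε)^2 + u^2 := by nlinarith
      have h2 : x^2 + u^2 ≤ (x + ε)^2 + u^2 := by nlinarith
      nlinarith [sq_nonneg x, sq_nonneg u, mul_le_mul h1 h2 (by positivity) (by positivity)]
    · have hx2u : x^2 ≤ 4*u^2 := by nlinarith
      have h1 : (x^2 + u^2)/5 ≤ (x - ε)^2 + u^2 := by nlinarith
      have h2 : x^2 + u^2 ≤ (x + ε)^2 + u^2 := by nlinarith
      nlinarith [mul_le_mul h1 h2 (by positivity) (by positivity)]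
  have hnum : (0:ℝ) ≤ 4*u^3*t/Real.pi := by
    have := Real.pi_pos
    positivity
  calc (4*u^3*t/Real.pi) / (((x - ε)^2 + u^2) * ((x + ε)^2 + u^2))
      ≤ (4*u^3*t/Real.pi) / ((x^2 + u^2)^2 / 5) := by
        apply div_le_div_of_nonneg_left hnum (by positivity) hprod
    _ = 5 * ((4*u^3*t/Real.pi) / (x^2 + u^2)^2) := by
        rw [div_div_eq_mul_div]
        ring
    _ = 5 * (u⁻¹ * wV t) := by rw [wV_scaled hu]

lemma Lker_tendsto (hu : 0 < u) {t : ℝ} (ht : 0 ≤ t) :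
    Tendsto (fun ε : ℝ => (u/ε) * qdensV u ε (u*t)) (𝓝[>]0) (𝓝 (u⁻¹ * wV t)) := by
  have hψ : ContinuousAt (fun ε : ℝ =>
      (4*u^3*t/Real.pi) / (((u*t - ε)^2 + u^2) * ((u*t + ε)^2 + u^2))) 0 := by
    apply ContinuousAt.div continuousAt_const (by fun_prop)
    have : (0:ℝ) < ((u*t - 0)^2 + u^2) * ((u*t + 0)^2 + u^2) := by positivity
    exact this.ne'
  have h0 : (4*u^3*t/Real.pi) / (((u*t - (0:ℝ))^2 + u^2) * ((u*t + (0:ℝ))^2 + u^2))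
      = u⁻¹ * wV t := by
    rw [sub_zero, add_zero, ← wV_scaled hu t]
    congr 1
    ring
  have htends := hψ.tendsto.mono_left (nhdsWithin_le_nhds (s := Ioi (0:ℝ)))
  rw [h0] at htends
  apply htends.congr'
  filter_upwards [self_mem_nhdsWithin] with ε (hε : 0 < ε)
  exact (Lker_eq hu hε t).symm

lemma ae_ne_one : ∀ᵐ s ∂(volume.restrict (Ioi (0:ℝ))), s ≠ (1:ℝ) := by
  refine ae_iff.2 ?_
  have h1 : {s : ℝ | ¬ s ≠ 1} = {1} := by
    ext s; simp
  rw [h1, Measure.restrict_apply (measurableSet_singleton 1)]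
  exact measure_mono_null inter_subset_left (measure_singleton 1)

lemma tendstoH (hf : MemCl2 f) (hu : 0 < u) :
    Tendsto (fun ε : ℝ => ∫ s in Ioi (0:ℝ), ((u/ε) * qdensH u ε (u*s)) • gfun f u s)
      (𝓝[>]0) (𝓝 (∫ s in Ioi (0:ℝ), (u⁻¹ * wH s) • gfun f u s)) := by
  have haesm_g : AEStronglyMeasurable (gfun f u) (volume.restrict (Ioi (0:ℝ))) :=
    ((contOn_gfun hf hu).mono Ioi_subset_Ici_self).aestronglyMeasurable measurableSet_Ioi
  apply tendsto_integral_filter_of_dominated_convergence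
    (bound := fun s => u⁻¹ * (wH s * ‖gfun f u s‖))
  · apply Eventually.of_forall
    intro ε
    apply AEStronglyMeasurable.fun_smul ?_ haesm_g
    apply Measurable.aestronglyMeasurable
    exact measurable_const.mul ((measurable_qdensH u ε).comp (measurable_const.mul measurable_id))
  · filter_upwards [self_mem_nhdsWithin] with ε (hε : 0 < ε)
    filter_upwards [ae_restrict_mem measurableSet_Ioi, ae_ne_one] with s hs hs1
    have hK0 : 0 ≤ (u/ε) * qdensH u ε (u*s) :=
      mul_nonneg (by positivity) (qdensH_nonneg hu.le hε.le (mul_nonneg hu.le (le_of_lt hs)))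
    rw [norm_smul, Real.norm_eq_abs, abs_of_nonneg hK0]
    calc (u/ε) * qdensH u ε (u*s) * ‖gfun f u s‖
        ≤ (u⁻¹ * wH s) * ‖gfun f u s‖ :=
          mul_le_mul_of_nonneg_right (Kker_le hu hε hs hs1) (norm_nonneg _)
      _ = u⁻¹ * (wH s * ‖gfun f u s‖) := by ring
  · have h1 : Integrable (fun s => ‖wH s • gfun f u s‖) μ0 := (integrable_wg hf hu).norm
    have h2 : IntegrableOn (fun s => ‖wH s • gfun f u s‖) (Ioi (0:ℝ)) volume := by
      have h1' : IntegrableOn (fun s => ‖wH s • gfun f u s‖) (Ici (0:ℝ)) volume := h1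
      exact h1'.mono_set Ioi_subset_Ici_self
    apply Integrable.congr (h2.const_mul u⁻¹)
    filter_upwards [ae_restrict_mem measurableSet_Ioi] with s hs
    rw [norm_smul, Real.norm_eq_abs, abs_of_nonneg (wH_nonneg (le_of_lt hs))]
  · filter_upwards [ae_restrict_mem measurableSet_Ioi, ae_ne_one] with s hs hs1
    exact (Kker_tendsto hu hs hs1).smul_const (gfun f u s)

lemma tendstoV (hf : MemCl2 f) (hu : 0 < u) :
    Tendsto (fun ε : ℝ => ∫ t in Ioi (0:ℝ), ((u/ε) * qdensV u ε (u*t)) • hfun f u t)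
      (𝓝[>]0) (𝓝 (∫ t in Ioi (0:ℝ), (u⁻¹ * wV t) • hfun f u t)) := by
  have haesm_h : AEStronglyMeasurable (hfun f u) (volume.restrict (Ioi (0:ℝ))) :=
    ((contOn_hfun hf hu).mono Ioi_subset_Ici_self).aestronglyMeasurable measurableSet_Ioi
  apply tendsto_integral_filter_of_dominated_convergence
    (bound := fun t => 5 * (u⁻¹ * (wV t * ‖hfun f u t‖)))
  · apply Eventually.of_forall
    intro ε
    apply AEStronglyMeasurable.fun_smul ?_ haesm_h
    apply Measurable.aestronglyMeasurable
    exact measurable_const.mul ((measurable_qdensV u ε).comp (measurable_const.mul measurable_id))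
  · filter_upwards [Ioo_mem_nhdsGT_of_mem (⟨le_refl (0:ℝ), hu⟩ : (0:ℝ) ∈ Ico (0:ℝ) u)]
      with ε hε
    filter_upwards [ae_restrict_mem measurableSet_Ioi] with t ht
    have hε0 : 0 < ε := hε.1
    have hεu : ε ≤ u := hε.2.le
    have hL0 : 0 ≤ (u/ε) * qdensV u ε (u*t) :=
      mul_nonneg (by positivity) (qdensV_nonneg hu.le hε0.le (mul_nonneg hu.le (le_of_lt ht)))
    rw [norm_smul, Real.norm_eq_abs, abs_of_nonneg hL0]
    calc (u/ε) * qdensV u ε (u*t) * ‖hfun f u t‖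
        ≤ (5 * (u⁻¹ * wV t)) * ‖hfun f u t‖ :=
          mul_le_mul_of_nonneg_right (Lker_le hu hε0 hεu (le_of_lt ht)) (norm_nonneg _)
      _ = 5 * (u⁻¹ * (wV t * ‖hfun f u t‖)) := by ring
  · have h1 : Integrable (fun t => ‖wV t • hfun f u t‖) μ0 := (integrable_wh hf hu).norm
    have h2 : IntegrableOn (fun t => ‖wV t • hfun f u t‖) (Ioi (0:ℝ)) volume := by
      have h1' : IntegrableOn (fun t => ‖wV t • hfun f u t‖) (Ici (0:ℝ)) volume := h1
      exact h1'.mono_set Ioi_subset_Ici_self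
    apply Integrable.congr ((h2.const_mul u⁻¹).const_mul 5)
    filter_upwards [ae_restrict_mem measurableSet_Ioi] with t ht
    rw [norm_smul, Real.norm_eq_abs, abs_of_nonneg (wV_nonneg (le_of_lt ht))]
    try ring
  · filter_upwards [ae_restrict_mem measurableSet_Ioi] with t ht
    exact (Lker_tendsto hu (le_of_lt ht)).smul_const (hfun f u t)

end Limits

section Assembly

variable {f : ℝ × ℝ → ℂ} {u : ℝ}

lemma scaleH (hu : 0 < u) (G : ℝ → ℂ) :
    (∫ s in Ioi (0:ℝ), G s) = u • ∫ s in Ioi (0:ℝ), G (u * s) := by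
  have h := integral_comp_mul_left_Ioi G 0 hu
  rw [mul_zero] at h
  rw [h, smul_inv_smul₀ hu.ne']

lemma smul_pull {ε : ℝ} (hε : 0 < ε) (q : ℝ → ℝ) (G : ℝ → ℂ) :
    (ε:ℂ)⁻¹ * (u • ∫ s in Ioi (0:ℝ), q s • G s)
      = ∫ s in Ioi (0:ℝ), ((u/ε) * q s) • G s := by
  have hεne : (ε:ℂ) ≠ 0 := Complex.ofReal_ne_zero.2 hε.ne'
  calc (ε:ℂ)⁻¹ * (u • ∫ s in Ioi (0:ℝ), q s • G s)
      = ((u/ε : ℝ)) • ∫ s in Ioi (0:ℝ), q s • G s := by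
        rw [Complex.real_smul, Complex.real_smul, Complex.ofReal_div]
        field_simp
        try ring
    _ = ∫ s in Ioi (0:ℝ), ((u/ε) * q s) • G s := by
        rw [← integral_smul]
        refine integral_congr_ae (Eventually.of_forall fun s => ?_)
        simp only [smul_smul]

lemma quot_repr (hf : MemCl2 f) (hu : 0 < u) {ε : ℝ} (hε : 0 < ε) :
    (ε:ℂ)⁻¹ * ((∫ z, f z ∂(Qmeas (u, ε))) - f (u, 0)) =
      (∫ s in Ioi (0:ℝ), ((u/ε) * qdensH u ε (u*s)) • gfun f u s)
      + (∫ t in Ioi (0:ℝ), ((u/ε) * qdensV u ε (u*t)) • hfun f u t) := by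
  rw [Qdiff hf hu hε]
  have hA : (∫ s in Ioi (0:ℝ), qdensH u ε s • gtil f u s)
      = u • ∫ s in Ioi (0:ℝ), qdensH u ε (u*s) • gfun f u s := by
    rw [scaleH hu (fun x => qdensH u ε x • gtil f u x)]
    congr 1
    refine integral_congr_ae (Eventually.of_forall fun s => ?_)
    simp only [gtil_scale]
  have hB : (∫ t in Ioi (0:ℝ), qdensV u ε t • htil f u t)
      = u • ∫ t in Ioi (0:ℝ), qdensV u ε (u*t) • hfun f u t := by
    rw [scaleH hu (fun x => qdensV u ε x • htil f u x)]
    congr 1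
    refine integral_congr_ae (Eventually.of_forall fun t => ?_)
    simp only [htil_scale]
  rw [hA, hB, mul_add, smul_pull hε _ (gfun f u), smul_pull hε _ (hfun f u)]

lemma smul_pull' (hu : 0 < u) (q : ℝ → ℝ) (G : ℝ → ℂ) :
    ((u:ℝ):ℂ)⁻¹ * (∫ s in Ioi (0:ℝ), q s • G s)
      = ∫ s in Ioi (0:ℝ), (u⁻¹ * q s) • G s := by
  calc ((u:ℝ):ℂ)⁻¹ * (∫ s in Ioi (0:ℝ), q s • G s)
      = ((u⁻¹ : ℝ)) • ∫ s in Ioi (0:ℝ), q s • G s := by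
        rw [Complex.real_smul, Complex.ofReal_inv]
    _ = ∫ s in Ioi (0:ℝ), (u⁻¹ * q s) • G s := by
        rw [← integral_smul]
        refine integral_congr_ae (Eventually.of_forall fun s => ?_)
        simp only [smul_smul]

lemma G2op_repr (hf : MemCl2 f) (hu : 0 < u) :
    G2op f (u, 0) = (∫ s in Ioi (0:ℝ), (u⁻¹ * wH s) • gfun f u s)
      + ∫ t in Ioi (0:ℝ), (u⁻¹ * wV t) • hfun f u t := by
  have hne : ((u, (0:ℝ)) : ℝ × ℝ).1 ≠ 0 := hu.ne'
  rw [G2op, if_neg hne]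
  have hint : Integrable (fun y : ℝ × ℝ =>
      f (u • y) - f (u, 0) - ((u * (y.1 - 1) : ℝ) : ℂ) * d1 f u) (axisMeas wH wV) := by
    rw [← nuMeas_eq']
    exact nu_integrable hf hu
  have hℐ : (∫ y, (f (((u, (0:ℝ)) : ℝ × ℝ).1 • y) - f (u, 0)
        - (((((u, (0:ℝ)) : ℝ × ℝ).1 * (y.1 - 1)) : ℝ) : ℂ) * d1 f ((u, (0:ℝ)) : ℝ × ℝ).1) ∂nuMeas)
      = (∫ s in Ioi (0:ℝ), wH s • gfun f u s) + ∫ t in Ioi (0:ℝ), wV t • hfun f u t := by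
    rw [nuMeas_eq']
    exact integral_axisMeas measurable_wH measurable_wV
      (fun s hs => wH_nonneg hs) (fun t ht => wV_nonneg ht) hint
  rw [hℐ, mul_add, smul_pull' hu _ (gfun f u), smul_pull' hu _ (hfun f u)]

/-- The hard case: the directional limit at an interior point of the horizontal axis. -/
lemma keyTendsto (hf : MemCl2 f) (hu : 0 < u) :
    Tendsto (fun ε : ℝ => (ε:ℂ)⁻¹ * ((∫ z, f z ∂(Qmeas (u, ε))) - f (u, 0)))
      (𝓝[>]0) (𝓝 (G2op f (u, 0))) := by
  rw [G2op_repr hf hu]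
  have h := (tendstoH hf hu).add (tendstoV hf hu)
  apply h.congr'
  filter_upwards [self_mem_nhdsWithin] with ε (hε : 0 < ε)
  exact (quot_repr hf hu hε).symm

end Assembly

section EasySwap

variable {f : ℝ × ℝ → ℂ}

lemma easyQuot (φ : ℝ → ℂ) {u : ℝ} (hu : 0 ≤ u)
    (hd : DifferentiableWithinAt ℝ φ (Ici 0) u) :
    Tendsto (fun ε : ℝ => (ε:ℂ)⁻¹ * (φ (u + ε) - φ u)) (𝓝[>]0)
      (𝓝 (derivWithin φ (Ici 0) u)) := by
  have h := hd.hasDerivWithinAt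
  rw [hasDerivWithinAt_iff_tendsto_slope] at h
  have hmap : Tendsto (fun ε : ℝ => u + ε) (𝓝[>](0:ℝ)) (𝓝[(Ici (0:ℝ)) \ {u}] u) := by
    apply tendsto_nhdsWithin_of_tendsto_nhds_of_eventually_within
    · have h0 : Tendsto (fun ε : ℝ => ε) (𝓝 (0:ℝ)) (𝓝 (0:ℝ)) := tendsto_id
      have : Tendsto (fun ε : ℝ => u + ε) (𝓝 (0:ℝ)) (𝓝 u) := by
        simpa using h0.const_add u
      exact this.mono_left nhdsWithin_le_nhds
    · filter_upwards [self_mem_nhdsWithin] with ε (hε : 0 < ε)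
      exact ⟨mem_Ici.2 (by linarith), by simp only [mem_singleton_iff]; intro hc; linarith⟩
  have h2 := h.comp hmap
  refine h2.congr fun ε => ?_
  simp only [Function.comp, slope_def_module]
  rw [add_sub_cancel_left, ← Complex.ofReal_inv, Complex.real_smul]

lemma emb_swap : MeasurableEmbedding (Prod.swap : ℝ × ℝ → ℝ × ℝ) :=
  (MeasurableEquiv.prodComm (α := ℝ) (β := ℝ)).measurableEmbedding

lemma qdensH_swap (a b s : ℝ) : qdensH b a s = qdensV a b s := by
  unfold qdensH qdensV
  ring_nf

lemma qdensV_swap (a b s : ℝ) : qdensV b a s = qdensH a b s := by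
  unfold qdensH qdensV
  ring_nf

lemma Qmeas_swap (a b : ℝ) : Qmeas (a, b) = Measure.map Prod.swap (Qmeas (b, a)) := by
  by_cases h : 0 < a ∧ 0 < b
  · rw [Qmeas, Qmeas, if_pos (show (0:ℝ) < (a, b).1 ∧ (0:ℝ) < (a, b).2 from h),
      if_pos (show (0:ℝ) < (b, a).1 ∧ (0:ℝ) < (b, a).2 from ⟨h.2, h.1⟩)]
    rw [Measure.map_add _ _ measurable_swap]
    rw [Measure.map_map measurable_swap embH.measurable,
      Measure.map_map measurable_swap embV.measurable]
    have hc1 : (Prod.swap ∘ fun s : ℝ => (s, (0:ℝ))) = fun s : ℝ => ((0:ℝ), s) := rfl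
    have hc2 : (Prod.swap ∘ fun s : ℝ => ((0:ℝ), s)) = fun s : ℝ => (s, (0:ℝ)) := rfl
    rw [hc1, hc2]
    have hd1 : (fun s => ENNReal.ofReal (qdensH (b, a).1 (b, a).2 s))
        = fun s => ENNReal.ofReal (qdensV (a, b).1 (a, b).2 s) := by
      funext s
      simp only
      rw [qdensH_swap]
    have hd2 : (fun s => ENNReal.ofReal (qdensV (b, a).1 (b, a).2 s))
        = fun s => ENNReal.ofReal (qdensH (a, b).1 (a, b).2 s) := by
      funext s
      simp only
      rw [qdensV_swap]
    rw [hd1, hd2]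
    exact (add_comm _ _)
  · have h' : ¬ (0 < b ∧ 0 < a) := fun hc => h ⟨hc.2, hc.1⟩
    rw [Qmeas, Qmeas, if_neg (show ¬ ((0:ℝ) < (a, b).1 ∧ (0:ℝ) < (a, b).2) from h),
      if_neg (show ¬ ((0:ℝ) < (b, a).1 ∧ (0:ℝ) < (b, a).2) from h')]
    rw [Measure.map_dirac' measurable_swap]
    rfl

lemma memCl2_swap (hf : MemCl2 f) : MemCl2 (swapF f) := by
  obtain ⟨L, hL1, hL2⟩ := hf.limits
  refine ⟨?_, ⟨L, hL2, hL1⟩, hf.diff2, hf.diff1, hf.contd2, hf.contd1,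
    hf.decay2, hf.decay1, hf.diff22, hf.diff11, ?_⟩
  · have hc : Continuous (Prod.swap : ℝ × ℝ → ℝ × ℝ) := continuous_swap
    apply hf.contOn.comp hc.continuousOn
    rintro ⟨p1, p2⟩ (⟨h1, h2⟩ | ⟨h1, h2⟩)
    · exact Or.inr ⟨h2, h1⟩
    · exact Or.inl ⟨h2, h1⟩
  · obtain ⟨C, hC⟩ := hf.bdd2
    refine ⟨C, fun r hr => ?_⟩
    have h := hC r hr
    have e1 : deriv (d1 (swapF f)) r = deriv (d2 f) r := rfl
    have e2 : deriv (d2 (swapF f)) r = deriv (d1 f) r := rfl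
    rw [e1, e2]
    linarith [h]

end EasySwap











end G16
end Helpers

open MeasureTheory Filter Set
open scoped Topology

/-- for `f ∈ C_l²(E)`, `x ∈ E` and `i ∈ {1,2}`, the integral defining
`G_i f(x)` is well defined (the integrand is `ν`-integrable) and
`lim_{ε↓0} ε⁻¹(∫_E f dQ_{x+εe_i} − f(x)) = G_i f(x)`. -/
theorem generator_directional_limits (f : ℝ × ℝ → ℂ) (hf : MemCl2 f)
    (x : ℝ × ℝ) (hx : x ∈ Eset) :
    (x.1 ≠ 0 → Integrable (fun y : ℝ × ℝ =>
        f (x.1 • y) - f x - (((x.1 * (y.1 - 1)) : ℝ) : ℂ) * d1 f x.1) nuMeas) ∧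
    (x.2 ≠ 0 → Integrable (fun y : ℝ × ℝ =>
        swapF f (x.2 • y) - swapF f (x.2, x.1)
          - (((x.2 * (y.1 - 1)) : ℝ) : ℂ) * d1 (swapF f) x.2) nuMeas) ∧
    Tendsto (fun ε : ℝ => (ε : ℂ)⁻¹ *
        ((∫ z, f z ∂(Qmeas (x + ε • ((1 : ℝ), (0 : ℝ))))) - f x))
      (𝓝[>] 0) (𝓝 (G1op f x)) ∧
    Tendsto (fun ε : ℝ => (ε : ℂ)⁻¹ *
        ((∫ z, f z ∂(Qmeas (x + ε • ((0 : ℝ), (1 : ℝ))))) - f x))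
      (𝓝[>] 0) (𝓝 (G2op f x)) := by
  obtain ⟨x1, x2⟩ := x
  simp only [Eset, Set.mem_setOf_eq] at hx
  rcases hx with ⟨hx1, hx2⟩ | ⟨hx1, hx2⟩
  · -- horizontal axis : x = (x1, 0)
    subst hx2
    refine ⟨?_, ?_, ?_, ?_⟩
    · intro h1
      have h1' : x1 ≠ 0 := h1
      have hu : 0 < x1 := lt_of_le_of_ne hx1 (Ne.symm h1')
      exact G16.nu_integrable hf hu
    · intro h2
      exact absurd rfl h2
    · -- direction e₁ : Dirac case
      have hT : G1op f (x1, 0) = derivWithin (fun t : ℝ => f (t, 0)) (Ici 0) x1 := by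
        show G2op (swapF f) ((0:ℝ), x1) = _
        rw [G2op, if_pos rfl]
        rfl
      rw [hT]
      have h := G16.easyQuot (fun t : ℝ => f (t, 0)) hx1 (hf.diff1 x1 hx1)
      apply h.congr
      intro ε
      have hpt : ((x1, (0:ℝ)) : ℝ × ℝ) + ε • ((1:ℝ), (0:ℝ)) = (x1 + ε, 0) := by
        simp [Prod.ext_iff]
      rw [hpt]
      have hQ : Qmeas (x1 + ε, 0) = Measure.dirac (x1 + ε, 0) := by
        rw [Qmeas, if_neg]
        rintro ⟨-, h0⟩
        exact lt_irrefl 0 h0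
      rw [hQ, integral_dirac]
    · -- direction e₂
      rcases hx1.lt_or_eq with hu | heq
      · -- hard case
        have h := G16.keyTendsto hf hu
        apply h.congr
        intro ε
        have hpt : ((x1, (0:ℝ)) : ℝ × ℝ) + ε • ((0:ℝ), (1:ℝ)) = (x1, ε) := by
          simp [Prod.ext_iff]
        rw [hpt]
      · -- origin : Dirac case
        subst heq
        have hT : G2op f ((0:ℝ), (0:ℝ)) = derivWithin (fun t : ℝ => f (0, t)) (Ici 0) 0 := by
          rw [G2op, if_pos rfl]
          rfl
        rw [hT]
        have h := G16.easyQuot (fun t : ℝ => f (0, t)) le_rfl (hf.diff2 0 le_rfl)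
        apply h.congr
        intro ε
        have hpt : (((0:ℝ), (0:ℝ)) : ℝ × ℝ) + ε • ((0:ℝ), (1:ℝ)) = (0, 0 + ε) := by
          simp [Prod.ext_iff]
        rw [hpt]
        have hQ : Qmeas ((0:ℝ), 0 + ε) = Measure.dirac ((0:ℝ), 0 + ε) := by
          rw [Qmeas, if_neg]
          rintro ⟨h0, -⟩
          exact lt_irrefl 0 h0
        rw [hQ, integral_dirac]
  · -- vertical axis : x = (0, x2)
    subst hx1
    refine ⟨?_, ?_, ?_, ?_⟩
    · intro h1
      exact absurd rfl h1
    · intro h2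
      have h2' : x2 ≠ 0 := h2
      have hv : 0 < x2 := lt_of_le_of_ne hx2 (Ne.symm h2')
      exact G16.nu_integrable (G16.memCl2_swap hf) hv
    · -- direction e₁
      rcases hx2.lt_or_eq with hv | heq
      · -- hard case via swap
        have hT : G1op f ((0:ℝ), x2) = G2op (swapF f) (x2, 0) := rfl
        rw [hT]
        have h := G16.keyTendsto (G16.memCl2_swap hf) hv
        apply h.congr
        intro ε
        have hpt : (((0:ℝ), x2) : ℝ × ℝ) + ε • ((1:ℝ), (0:ℝ)) = (ε, x2) := by
          simp [Prod.ext_iff]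
        rw [hpt, G16.Qmeas_swap ε x2, G16.emb_swap.integral_map]
        rfl
      · -- origin : Dirac case
        subst heq
        have hT : G1op f ((0:ℝ), (0:ℝ)) = derivWithin (fun t : ℝ => f (t, 0)) (Ici 0) 0 := by
          show G2op (swapF f) ((0:ℝ), (0:ℝ)) = _
          rw [G2op, if_pos rfl]
          rfl
        rw [hT]
        have h := G16.easyQuot (fun t : ℝ => f (t, 0)) le_rfl (hf.diff1 0 le_rfl)
        apply h.congr
        intro ε
        have hpt : (((0:ℝ), (0:ℝ)) : ℝ × ℝ) + ε • ((1:ℝ), (0:ℝ)) = (0 + ε, 0) := by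
          simp [Prod.ext_iff]
        rw [hpt]
        have hQ : Qmeas (0 + ε, (0:ℝ)) = Measure.dirac (0 + ε, (0:ℝ)) := by
          rw [Qmeas, if_neg]
          rintro ⟨-, h0⟩
          exact lt_irrefl 0 h0
        rw [hQ, integral_dirac]
    · -- direction e₂ : Dirac case
      have hT : G2op f ((0:ℝ), x2) = derivWithin (fun t : ℝ => f (0, t)) (Ici 0) x2 := by
        rw [G2op, if_pos rfl]
        rfl
      rw [hT]
      have h := G16.easyQuot (fun t : ℝ => f (0, t)) hx2 (hf.diff2 x2 hx2)
      apply h.congr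
      intro ε
      have hpt : (((0:ℝ), x2) : ℝ × ℝ) + ε • ((0:ℝ), (1:ℝ)) = (0, x2 + ε) := by
        simp [Prod.ext_iff]
      rw [hpt]
      have hQ : Qmeas ((0:ℝ), x2 + ε) = Measure.dirac ((0:ℝ), x2 + ε) := by
        rw [Qmeas, if_neg]
        rintro ⟨h0, -⟩
        exact lt_irrefl 0 h0
      rw [hQ, integral_dirac]
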